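/- arXiv:1608.01672 — 3 statements merged into one kernel-verified Lean document; each statement's English description precedes it below -/
import Mathlib

section
/- Let A be a unital C*-algebra, M a Hilbert A-module, H and K Hilbert spaces, φ : A → L(H) a completely positive map, and Φ : M → L(H,K) a φ-completely positive map, i.e., Φ(x)*Φ(y) = φ(⟨x,y⟩) for all x, y ∈ M. Let (π, H^Φ, S) be the minimal Stinespring dilation of φ. Then there exists a unique continuous linear map Π : M → L(H^Φ, K) such that Π(x)(π(a)Sξ) = Φ(xa)ξ for all x ∈ M, a ∈ A, ξ ∈ H, and moreover ‖Π(x)η‖² ≤ ‖π(⟨x,x⟩)‖ · ‖η‖² for η in the span of π(A)SH. -/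
open ContinuousLinearMap

noncomputable section

def IsPosMat {R : Type*} [NonUnitalSemiring R] [StarRing R] {n : ℕ}
    (M : Matrix (Fin n) (Fin n) R) : Prop :=
  ∃ B : Matrix (Fin n) (Fin n) R, M = B.conjTranspose * B

def IsCPFun {A B : Type*} [NonUnitalSemiring A] [StarRing A]
    [NonUnitalSemiring B] [StarRing B] (f : A → B) : Prop :=
  ∀ (m : ℕ) (a : Matrix (Fin m) (Fin m) A), IsPosMat a → IsPosMat (a.map f)

lemma key_lemma {K H₁ : Type*} [NormedAddCommGroup K] [InnerProductSpace ℂ K] [CompleteSpace K]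
    [NormedAddCommGroup H₁] [InnerProductSpace ℂ H₁] [CompleteSpace H₁]
    {ι : Type*} (v : ι → H₁) (u : ι → K) (T : H₁ →L[ℂ] H₁)
    (hvu : ∀ i j, (inner ℂ (u i) (u j) : ℂ) = inner ℂ (v i) (T (v j)))
    (hdense : Dense (X := H₁) (Submodule.span ℂ (Set.range v) : Set H₁)) :
    ∃ g : H₁ →L[ℂ] K, (∀ i, g (v i) = u i) ∧
      (∀ η ∈ Submodule.span ℂ (Set.range v), ‖g η‖ ^ 2 ≤ ‖T‖ * ‖η‖ ^ 2) ∧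
      (∀ g' : H₁ →L[ℂ] K, (∀ i, g' (v i) = u i) → g' = g) := by
  classical
  set q : (ι →₀ ℂ) →ₗ[ℂ] H₁ := Finsupp.linearCombination ℂ v with hq
  set t : (ι →₀ ℂ) →ₗ[ℂ] K := Finsupp.linearCombination ℂ u with ht
  have master : ∀ w w' : ι →₀ ℂ, (inner ℂ (t w) (t w') : ℂ) = inner ℂ (q w) (T (q w')) := by
    intro w w'
    simp only [hq, ht, Finsupp.linearCombination_apply, Finsupp.sum, map_sum, map_smul]
    rw [sum_inner, sum_inner]
    refine Finset.sum_congr rfl fun i _ => ?_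
    rw [inner_sum, inner_sum]
    refine Finset.sum_congr rfl fun j _ => ?_
    rw [inner_smul_left, inner_smul_left, inner_smul_right, inner_smul_right, hvu]
  have hbound : ∀ w : ι →₀ ℂ, ‖t w‖ ^ 2 ≤ ‖T‖ * ‖q w‖ ^ 2 := by
    intro w
    have h1 : (‖t w‖ : ℝ) ^ 2 = RCLike.re (inner ℂ (t w) (t w) : ℂ) :=
      (inner_self_eq_norm_sq _).symm
    rw [h1, master w w]
    calc RCLike.re (inner ℂ (q w) (T (q w)) : ℂ)
        ≤ ‖(inner ℂ (q w) (T (q w)) : ℂ)‖ := RCLike.re_le_norm _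
      _ ≤ ‖q w‖ * ‖T (q w)‖ := norm_inner_le_norm _ _
      _ ≤ ‖q w‖ * (‖T‖ * ‖q w‖) := by
          gcongr; exact T.le_opNorm _
      _ = ‖T‖ * ‖q w‖ ^ 2 := by ring
  have hker : LinearMap.ker q ≤ LinearMap.ker t := by
    intro w hw
    simp only [LinearMap.mem_ker] at hw ⊢
    have h := master w w
    rw [hw] at h
    simp only [map_zero, inner_zero_right] at h
    exact inner_self_eq_zero.mp h
  have hrange : LinearMap.range q = Submodule.span ℂ (Set.range v) :=
    Finsupp.range_linearCombination ..
  let f₀ : (Submodule.span ℂ (Set.range v)) →ₗ[ℂ] K :=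
    ((LinearMap.ker q).liftQ t hker) ∘ₗ
      (q.quotKerEquivRange.symm : LinearMap.range q →ₗ[ℂ] _) ∘ₗ
      (LinearEquiv.ofEq _ _ hrange.symm).toLinearMap
  have hf₀ : ∀ (w : ι →₀ ℂ) (h : q w ∈ Submodule.span ℂ (Set.range v)), f₀ ⟨q w, h⟩ = t w := by
    intro w h
    have h2 : q w ∈ LinearMap.range q := ⟨w, rfl⟩
    have he : q.quotKerEquivRange.symm ⟨q w, h2⟩ = (LinearMap.ker q).mkQ w :=
      q.quotKerEquivRange_symm_apply_image w h2
    show ((LinearMap.ker q).liftQ t hker)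
      (q.quotKerEquivRange.symm ((LinearEquiv.ofEq _ _ hrange.symm) ⟨q w, h⟩)) = t w
    have h3 : (LinearEquiv.ofEq _ _ hrange.symm) ⟨q w, h⟩ = ⟨q w, h2⟩ := by
      ext; simp
    rw [h3, he]
    erw [Submodule.liftQ_apply]
  have hf₀bound : ∀ y : Submodule.span ℂ (Set.range v), ‖f₀ y‖ ≤ Real.sqrt ‖T‖ * ‖y‖ := by
    rintro ⟨yv, hyv⟩
    obtain ⟨w, rfl⟩ : yv ∈ LinearMap.range q := by rw [hrange]; exact hyv
    rw [hf₀ w hyv]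
    have hb := hbound w
    calc ‖t w‖ = Real.sqrt (‖t w‖ ^ 2) := (Real.sqrt_sq (norm_nonneg _)).symm
      _ ≤ Real.sqrt (‖T‖ * ‖q w‖ ^ 2) := Real.sqrt_le_sqrt hb
      _ = Real.sqrt ‖T‖ * ‖q w‖ := by
          rw [Real.sqrt_mul (norm_nonneg T), Real.sqrt_sq (norm_nonneg _)]
  let f : (Submodule.span ℂ (Set.range v)) →L[ℂ] K :=
    f₀.mkContinuous (Real.sqrt ‖T‖) hf₀bound
  have hd : DenseRange ((Submodule.span ℂ (Set.range v)).subtypeL) := by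
    have hr : Set.range ((Submodule.span ℂ (Set.range v)).subtypeL)
        = (Submodule.span ℂ (Set.range v) : Set H₁) := by
      ext z
      exact ⟨fun ⟨y, hy⟩ => hy ▸ y.2, fun hz => ⟨⟨z, hz⟩, rfl⟩⟩
    rw [DenseRange, hr]; exact hdense
  have hui : IsUniformInducing ((Submodule.span ℂ (Set.range v)).subtypeL) :=
    isUniformEmbedding_subtype_val.isUniformInducing
  let g := f.extend ((Submodule.span ℂ (Set.range v)).subtypeL)
  have hg_span : ∀ y : Submodule.span ℂ (Set.range v), g y = f₀ y := fun y =>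
    extend_eq (f := f) (e := _) hd hui y
  have hg1 : ∀ i, g (v i) = u i := by
    intro i
    have hmem : v i ∈ Submodule.span ℂ (Set.range v) := Submodule.subset_span ⟨i, rfl⟩
    have hv : v i = q (Finsupp.single i 1) := by simp [hq]
    have hmem' : q (Finsupp.single i 1) ∈ Submodule.span ℂ (Set.range v) := hv ▸ hmem
    have := hg_span ⟨v i, hmem⟩
    rw [this]
    have h4 : (⟨v i, hmem⟩ : Submodule.span ℂ (Set.range v)) = ⟨q (Finsupp.single i 1), hmem'⟩ := by
      ext; exact hv
    rw [h4, hf₀]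
    simp [ht]
  refine ⟨g, hg1, ?_, ?_⟩
  · intro η hη
    obtain ⟨w, rfl⟩ : η ∈ LinearMap.range q := by rw [hrange]; exact hη
    have := hg_span ⟨q w, hη⟩
    rw [show g (q w) = f₀ ⟨q w, hη⟩ from this, hf₀ w hη]
    exact hbound w
  · intro g' hg'
    refine ContinuousLinearMap.ext_on hdense ?_
    rintro z ⟨i, rfl⟩
    rw [hg' i, hg1 i]

/-- Given a `φ`-completely positive map `Φ : M → L(H,K)` on a Hilbert `A`-module `M`
(`Φ(x)*Φ(y) = φ(⟨x,y⟩)`) and the minimal Stinespring dilation `(π, H₁, S)` of `φ`, there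
is a unique continuous linear map `P : M → L(H₁, K)` with `P(x)(π(a)Sξ) = Φ(xa)ξ`, and it
satisfies `‖P(x)η‖² ≤ ‖π(⟨x,x⟩)‖ ‖η‖²` for `η` in the span of `π(A)SH`. -/
theorem stmt9 {A M H K H₁ : Type*}
    [NormedRing A] [StarRing A] [CStarRing A] [NormedAlgebra ℂ A] [StarModule ℂ A]
    [CompleteSpace A]
    [NormedAddCommGroup M] [NormedSpace ℂ M]
    [NormedAddCommGroup H] [InnerProductSpace ℂ H] [CompleteSpace H]
    [NormedAddCommGroup K] [InnerProductSpace ℂ K] [CompleteSpace K]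
    [NormedAddCommGroup H₁] [InnerProductSpace ℂ H₁] [CompleteSpace H₁]
    (inner_ : M → M → A) (ract : M → A → M)
    -- Hilbert module axioms used
    (hract_inner : ∀ (x y : M) (a b : A),
      inner_ (ract x a) (ract y b) = star a * inner_ x y * b)
    (hract_one : ∀ x : M, ract x 1 = x)
    (hract_add : ∀ (x y : M) (a : A), ract (x + y) a = ract x a + ract y a)
    (hract_smul : ∀ (c : ℂ) (x : M) (a : A), ract (c • x) a = c • ract x a)
    (hnorm : ∀ x : M, ‖x‖ ^ 2 = ‖inner_ x x‖)
    (φ : A →ₗ[ℂ] (H →L[ℂ] H)) (hφ : IsCPFun fun a => φ a)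
    (Φ : M → (H →L[ℂ] K))
    (hΦadd : ∀ x y : M, Φ (x + y) = Φ x + Φ y)
    (hΦsmul : ∀ (c : ℂ) (x : M), Φ (c • x) = c • Φ x)
    (hΦ : ∀ x y : M, (adjoint (Φ x)).comp (Φ y) = φ (inner_ x y))
    (π : A →⋆ₐ[ℂ] (H₁ →L[ℂ] H₁)) (S : H →L[ℂ] H₁)
    (hdil : ∀ a : A, φ a = (adjoint S).comp ((π a).comp S))
    (hmin : (Submodule.span ℂ
      {v : H₁ | ∃ (a : A) (ξ : H), v = π a (S ξ)}).topologicalClosure = ⊤) :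
    ∃ P : M →L[ℂ] (H₁ →L[ℂ] K),
      (∀ (x : M) (a : A) (ξ : H), P x (π a (S ξ)) = Φ (ract x a) ξ) ∧
      (∀ Q : M →L[ℂ] (H₁ →L[ℂ] K),
        (∀ (x : M) (a : A) (ξ : H), Q x (π a (S ξ)) = Φ (ract x a) ξ) → Q = P) ∧
      ∀ x : M, ∀ η ∈ Submodule.span ℂ {v : H₁ | ∃ (a : A) (ξ : H), v = π a (S ξ)},
        ‖P x η‖ ^ 2 ≤ ‖π (inner_ x x)‖ * ‖η‖ ^ 2 := by
  classical
  have hV : {w : H₁ | ∃ (a : A) (ξ : H), w = π a (S ξ)} =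
      Set.range (fun p : A × H => π p.1 (S p.2)) := by
    ext w
    constructor
    · rintro ⟨a, ξ, rfl⟩; exact ⟨(a, ξ), rfl⟩
    · rintro ⟨⟨a, ξ⟩, rfl⟩; exact ⟨a, ξ, rfl⟩
  have hdense : Dense (X := H₁)
      (Submodule.span ℂ (Set.range fun p : A × H => π p.1 (S p.2)) : Set H₁) := by
    rw [← hV]
    exact Submodule.dense_iff_topologicalClosure_eq_top.mpr hmin
  have hvu : ∀ x : M, ∀ i j : A × H,
      (inner ℂ (Φ (ract x i.1) i.2) (Φ (ract x j.1) j.2) : ℂ)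
        = inner ℂ (π i.1 (S i.2)) (π (inner_ x x) (π j.1 (S j.2))) := by
    rintro x ⟨a, ξ⟩ ⟨b, ζ⟩
    have h1 : (inner ℂ (Φ (ract x a) ξ) (Φ (ract x b) ζ) : ℂ)
        = inner ℂ ξ ((adjoint (Φ (ract x a))) (Φ (ract x b) ζ)) :=
      (adjoint_inner_right _ _ _).symm
    have h2 : (adjoint (Φ (ract x a))) (Φ (ract x b) ζ)
        = (adjoint S) (π (star a * inner_ x x * b) (S ζ)) := by
      have := hΦ (ract x a) (ract x b)
      have h3 : φ (inner_ (ract x a) (ract x b)) ζ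
          = (adjoint S) (π (star a * inner_ x x * b) (S ζ)) := by
        rw [hract_inner, hdil]; rfl
      calc (adjoint (Φ (ract x a))) (Φ (ract x b) ζ)
          = ((adjoint (Φ (ract x a))).comp (Φ (ract x b))) ζ := rfl
        _ = φ (inner_ (ract x a) (ract x b)) ζ := by rw [this]
        _ = _ := h3
    rw [h1, h2, adjoint_inner_right]
    have h4 : π (star a * inner_ x x * b) = adjoint (π a) * (π (inner_ x x) * π b) := by
      rw [map_mul, map_mul, map_star, star_eq_adjoint, mul_assoc]
    rw [h4]
    rw [ContinuousLinearMap.mul_apply, adjoint_inner_right]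
    rfl
  choose g hg1 hg2 hg3 using fun x : M =>
    key_lemma (fun p : A × H => π p.1 (S p.2)) (fun p => Φ (ract x p.1) p.2)
      (π (inner_ x x)) (hvu x) hdense
  have hadd : ∀ x y, g (x + y) = g x + g y := by
    intro x y
    refine (hg3 (x + y) (g x + g y) ?_).symm
    rintro ⟨a, ξ⟩
    have := hg1 x (a, ξ)
    have := hg1 y (a, ξ)
    simp only [ContinuousLinearMap.add_apply]
    rw [hg1 x (a, ξ), hg1 y (a, ξ)]
    simp only [hract_add, hΦadd, ContinuousLinearMap.add_apply]
  have hsmul : ∀ (c : ℂ) (x : M), g (c • x) = c • g x := by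
    intro c x
    refine (hg3 (c • x) (c • g x) ?_).symm
    rintro ⟨a, ξ⟩
    simp only [ContinuousLinearMap.smul_apply]
    rw [hg1 x (a, ξ)]
    simp only [hract_smul, hΦsmul, ContinuousLinearMap.smul_apply]
  letI : CStarAlgebra A :=
    { ‹NormedRing A›, ‹StarRing A›, ‹CStarRing A›, ‹NormedAlgebra ℂ A›, ‹StarModule ℂ A›,
      ‹CompleteSpace A› with }
  have hπ : ∀ a : A, ‖π a‖ ≤ ‖a‖ := fun a => NonUnitalStarAlgHom.norm_apply_le π a
  have hnormg : ∀ x : M, ∀ η : H₁, ‖g x η‖ ≤ ‖x‖ * ‖η‖ := by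
    intro x
    have hclosed : IsClosed {η : H₁ | ‖g x η‖ ≤ ‖x‖ * ‖η‖} :=
      isClosed_le ((g x).continuous.norm) (continuous_const.mul continuous_norm)
    have hsub : (Submodule.span ℂ (Set.range fun p : A × H => π p.1 (S p.2)) : Set H₁)
        ⊆ {η : H₁ | ‖g x η‖ ≤ ‖x‖ * ‖η‖} := by
      intro η hη
      have h2 := hg2 x η hη
      have h3 : ‖π (inner_ x x)‖ ≤ ‖x‖ ^ 2 := by
        rw [hnorm]; exact hπ _
      have h5 : ‖g x η‖ ^ 2 ≤ (‖x‖ * ‖η‖) ^ 2 := by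
        calc ‖g x η‖ ^ 2 ≤ ‖π (inner_ x x)‖ * ‖η‖ ^ 2 := h2
          _ ≤ ‖x‖ ^ 2 * ‖η‖ ^ 2 := by gcongr
          _ = (‖x‖ * ‖η‖) ^ 2 := by ring
      calc ‖g x η‖ = Real.sqrt (‖g x η‖ ^ 2) := (Real.sqrt_sq (norm_nonneg _)).symm
        _ ≤ Real.sqrt ((‖x‖ * ‖η‖) ^ 2) := Real.sqrt_le_sqrt h5
        _ = ‖x‖ * ‖η‖ := Real.sqrt_sq (by positivity)
    have hds : Dense {η : H₁ | ‖g x η‖ ≤ ‖x‖ * ‖η‖} := hdense.mono hsub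
    have huniv : {η : H₁ | ‖g x η‖ ≤ ‖x‖ * ‖η‖} = Set.univ := by
      rw [← hclosed.closure_eq]; exact hds.closure_eq
    intro η
    exact Set.eq_univ_iff_forall.mp huniv η
  let Pl : M →ₗ[ℂ] (H₁ →L[ℂ] K) :=
    { toFun := g, map_add' := hadd, map_smul' := hsmul }
  let P : M →L[ℂ] (H₁ →L[ℂ] K) := Pl.mkContinuous 1 (fun x => by
    rw [one_mul]
    exact ContinuousLinearMap.opNorm_le_bound _ (norm_nonneg x) (hnormg x))
  have hPx : ∀ x : M, P x = g x := fun x => rfl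
  refine ⟨P, ?_, ?_, ?_⟩
  · intro x a ξ
    rw [hPx]
    exact hg1 x (a, ξ)
  · intro Q hQ
    ext x : 1
    rw [hPx]
    exact hg3 x (Q x) fun p => hQ x p.1 p.2
  · intro x η hη
    rw [hV] at hη
    rw [hPx]
    exact hg2 x η hη
end
end

section
/- Radon–Nikodym theorem for completely positive maps: let A be a unital C*-algebra, H a Hilbert space, and φ, ψ : A → L(H) completely positive maps with ψ ≤ φ (φ − ψ completely positive). Let (π, H^φ, S) be the minimal Stinespring dilation of φ. Then there exists a unique positive operator Δ ∈ π(A)' with 0 ≤ Δ ≤ I such that ψ(a) = S* Δ π(a) S for all a ∈ A. -/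
open ContinuousLinearMap

noncomputable section

open scoped ComplexOrder

set_option linter.unusedSectionVars false
namespace RN
variable {A H H₁ : Type*}
    [NormedRing A] [StarRing A] [CStarRing A] [NormedAlgebra ℂ A] [StarModule ℂ A]
    [CompleteSpace A]
    [NormedAddCommGroup H] [InnerProductSpace ℂ H] [CompleteSpace H]
    [NormedAddCommGroup H₁] [InnerProductSpace ℂ H₁] [CompleteSpace H₁]

local notation "⟪" x ", " y "⟫" => @inner ℂ _ _ x y

/-- Key positivity: for a CP map, the matrix-type sum is nonnegative. -/
theorem fin_nonneg (ψ : A →ₗ[ℂ] (H →L[ℂ] H)) (hψ : IsCPFun fun a => ψ a)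
    (n : ℕ) (a : Fin n → A) (ξ : Fin n → H) :
    0 ≤ ∑ i, ∑ j, ⟪ξ i, ψ (star (a i) * a j) (ξ j)⟫ := by
  rcases Nat.eq_zero_or_pos n with rfl | hn
  · simp
  have hpos : IsPosMat (Matrix.of fun i j => star (a i) * a j) := by
    refine ⟨Matrix.of fun i j => if (i : ℕ) = 0 then a j else 0, ?_⟩
    ext i j
    simp only [Matrix.mul_apply, Matrix.conjTranspose_apply, Matrix.of_apply]
    rw [Finset.sum_eq_single (⟨0, hn⟩ : Fin n)]
    · simp
    · intro k _ hk
      have : (k : ℕ) ≠ 0 := by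
        intro h; exact hk (Fin.ext h)
      simp [this]
    · simp
  obtain ⟨C, hC⟩ := hψ n _ hpos
  have hterm : ∀ i j, ψ (star (a i) * a j) = ∑ k, (adjoint (C k i)).comp (C k j) := by
    intro i j
    have h1 : ((Matrix.of fun i j => star (a i) * a j).map fun a => ψ a) i j
        = (C.conjTranspose * C) i j := by rw [hC]
    simpa [Matrix.mul_apply, Matrix.map_apply, ContinuousLinearMap.mul_def,
      ContinuousLinearMap.star_eq_adjoint] using h1
  calc (0:ℂ) ≤ ∑ k, ⟪∑ i, C k i (ξ i), ∑ i, C k i (ξ i)⟫ := by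
        refine Finset.sum_nonneg fun k _ => ?_
        rw [inner_self_eq_norm_sq_to_K]
        positivity
    _ = ∑ i, ∑ j, ⟪ξ i, ψ (star (a i) * a j) (ξ j)⟫ := by
        simp only [hterm, ContinuousLinearMap.sum_apply, inner_sum, sum_inner,
          ContinuousLinearMap.comp_apply, adjoint_inner_right]
        conv_lhs => rw [Finset.sum_comm]; enter [2,j]; rw [Finset.sum_comm]
        rw [Finset.sum_comm]


variable (ψ : A →ₗ[ℂ] (H →L[ℂ] H))

/-- elementary kernel -/
def g (p q : A × H) : ℂ := ⟪p.2, ψ (star p.1 * q.1) q.2⟫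

/-- the sesquilinear form on `(A × H) →₀ ℂ` induced by `ψ`. -/
def B (x y : (A × H) →₀ ℂ) : ℂ :=
  x.sum fun p c => y.sum fun q d => (starRingEnd ℂ) c * d * g ψ p q

variable (π : A →⋆ₐ[ℂ] (H₁ →L[ℂ] H₁)) (S : H →L[ℂ] H₁)

/-- the canonical map `(A × H) →₀ ℂ → H₁`. -/
def P : ((A × H) →₀ ℂ) →ₗ[ℂ] H₁ :=
  Finsupp.linearCombination ℂ (fun p : A × H => π p.1 (S p.2))

variable {ψ π S}

theorem B_single_single (p q : A × H) (c d : ℂ) :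
    B ψ (Finsupp.single p c) (Finsupp.single q d) = (starRingEnd ℂ) c * d * g ψ p q := by
  rw [B, Finsupp.sum_single_index, Finsupp.sum_single_index]
  · simp
  · rw [Finsupp.sum_single_index] <;> simp

theorem B_add_left (x x' y : (A × H) →₀ ℂ) :
    B ψ (x + x') y = B ψ x y + B ψ x' y := by
  classical
  rw [B, Finsupp.sum_add_index, B, B]
  · simp
  · intro p _ c c'
    rw [← Finsupp.sum_add]
    congr 1; ext q d; rw [map_add]; ring

theorem B_add_right (x y y' : (A × H) →₀ ℂ) :
    B ψ x (y + y') = B ψ x y + B ψ x y' := by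
  classical
  rw [B, B, B, ← Finsupp.sum_add]
  congr 1; ext p c
  rw [Finsupp.sum_add_index]
  · simp
  · intro q _ d d'; ring

theorem B_smul_left (s : ℂ) (x y : (A × H) →₀ ℂ) :
    B ψ (s • x) y = (starRingEnd ℂ) s * B ψ x y := by
  rw [B, B, Finsupp.sum_smul_index, Finsupp.mul_sum]
  · congr 1; ext p c
    rw [Finsupp.mul_sum]
    congr 1; ext q d; rw [map_mul]; ring
  · intro p; simp

theorem B_smul_right (s : ℂ) (x y : (A × H) →₀ ℂ) :
    B ψ x (s • y) = s * B ψ x y := by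
  rw [B, B, Finsupp.mul_sum]
  congr 1; ext p c
  rw [Finsupp.sum_smul_index, Finsupp.mul_sum]
  · congr 1; ext q d; ring
  · intro q; simp

theorem B_neg_left (x y : (A × H) →₀ ℂ) : B ψ (-x) y = - B ψ x y := by
  have := B_smul_left (ψ := ψ) (-1) x y
  simpa using this

theorem B_sub_left (x x' y : (A × H) →₀ ℂ) :
    B ψ (x - x') y = B ψ x y - B ψ x' y := by
  rw [sub_eq_add_neg, B_add_left, B_neg_left, sub_eq_add_neg]

theorem B_map_sub (φ : A →ₗ[ℂ] (H →L[ℂ] H)) (x y : (A × H) →₀ ℂ) :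
    B (φ - ψ) x y = B φ x y - B ψ x y := by
  rw [B, B, B, ← Finsupp.sum_sub]
  congr 1; ext p c
  rw [← Finsupp.sum_sub]
  congr 1; ext q d
  rw [g, g, g, LinearMap.sub_apply, ContinuousLinearMap.sub_apply, inner_sub_right]
  ring

/-- positivity of the diagonal. -/
theorem B_nonneg (hψ : IsCPFun fun a => ψ a) (x : (A × H) →₀ ℂ) : 0 ≤ B ψ x x := by
  classical
  set s := x.support
  set n := s.card
  set e : Fin n ≃ s := s.equivFin.symm
  have key : B ψ x x = ∑ i : Fin n, ∑ j : Fin n,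
      ⟪x (e i) • ((e i : A × H)).2, ψ (star ((e i : A × H)).1 * ((e j : A × H)).1)
        (x (e j) • ((e j : A × H)).2)⟫ := by
    rw [B, Finsupp.sum]
    rw [← Finset.sum_coe_sort s, ← Equiv.sum_comp e]
    refine Finset.sum_congr rfl fun i _ => ?_
    rw [Finsupp.sum, ← Finset.sum_coe_sort s, ← Equiv.sum_comp e]
    refine Finset.sum_congr rfl fun j _ => ?_
    rw [g]
    simp only [ContinuousLinearMap.map_smul, inner_smul_left, inner_smul_right]
    ring
  rw [key]
  exact fin_nonneg ψ hψ n _ _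

theorem inner_gen {φ : A →ₗ[ℂ] (H →L[ℂ] H)}
    (hdil : ∀ a : A, φ a = (adjoint S).comp ((π a).comp S)) (a b : A) (ξ η : H) :
    ⟪ξ, φ (star a * b) η⟫ = ⟪π a (S ξ), π b (S η)⟫ := by
  rw [hdil, ContinuousLinearMap.comp_apply, ContinuousLinearMap.comp_apply,
    adjoint_inner_right, map_mul, map_star, ContinuousLinearMap.star_eq_adjoint,
    ContinuousLinearMap.mul_apply, adjoint_inner_right]

/-- the `φ` form computes the inner ℂ product of images. -/
theorem B_eq_inner {φ : A →ₗ[ℂ] (H →L[ℂ] H)}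
    (hdil : ∀ a : A, φ a = (adjoint S).comp ((π a).comp S))
    (x y : (A × H) →₀ ℂ) :
    B φ x y = ⟪P π S x, P π S y⟫ := by
  rw [B, P, Finsupp.linearCombination_apply, Finsupp.linearCombination_apply]
  simp only [Finsupp.sum]
  rw [sum_inner]
  refine Finset.sum_congr rfl fun p _ => ?_
  rw [inner_sum]
  refine Finset.sum_congr rfl fun q _ => ?_
  rw [inner_smul_left, inner_smul_right, g, inner_gen hdil]
  ring


theorem B_im_zero (hψ : IsCPFun fun a => ψ a) (x : (A × H) →₀ ℂ) : (B ψ x x).im = 0 :=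
  ((Complex.nonneg_iff).1 (B_nonneg hψ x)).2.symm

theorem B_re_nonneg (hψ : IsCPFun fun a => ψ a) (x : (A × H) →₀ ℂ) : 0 ≤ (B ψ x x).re :=
  ((Complex.nonneg_iff).1 (B_nonneg hψ x)).1

theorem B_conj (hψ : IsCPFun fun a => ψ a) (x y : (A × H) →₀ ℂ) :
    (starRingEnd ℂ) (B ψ y x) = B ψ x y := by
  have hx := B_im_zero hψ x
  have hy := B_im_zero hψ y
  have h1 := B_im_zero hψ (x + y)
  have h2 := B_im_zero hψ (x + Complex.I • y)
  simp only [B_add_left, B_add_right, B_smul_left, B_smul_right, Complex.conj_I,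
    Complex.add_im, Complex.add_re, Complex.neg_im, Complex.neg_re, Complex.mul_im,
    Complex.mul_re, Complex.I_re, Complex.I_im, neg_mul, neg_neg] at h1 h2
  apply Complex.ext <;>
    simp only [Complex.conj_re, Complex.conj_im] <;> linarith

theorem B_cauchy (hψ : IsCPFun fun a => ψ a) (x y : (A × H) →₀ ℂ) :
    Complex.normSq (B ψ x y) ≤ (B ψ x x).re * (B ψ y y).re := by
  set u := B ψ x y with hu
  set N : ℝ := Complex.normSq u with hN
  set rx : ℝ := (B ψ x x).re
  set ry : ℝ := (B ψ y y).re
  have hrx : 0 ≤ rx := B_re_nonneg hψ x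
  have hry : 0 ≤ ry := B_re_nonneg hψ y
  have hNn : 0 ≤ N := Complex.normSq_nonneg u
  have key : ∀ t : ℝ, 0 ≤ rx - 2*t*N + t^2*N*ry := by
    intro t
    have h0 := B_nonneg hψ (x + (-(t:ℂ) * (starRingEnd ℂ) u) • y)
    have hexp : B ψ (x + (-(t:ℂ) * (starRingEnd ℂ) u) • y)
        (x + (-(t:ℂ) * (starRingEnd ℂ) u) • y)
        = B ψ x x + ((-2*t*N : ℝ) : ℂ) + ((t^2*N : ℝ) : ℂ) * B ψ y y := by
      rw [B_add_left, B_add_right, B_add_right, B_smul_left, B_smul_right,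
        B_smul_left, B_smul_right, ← B_conj hψ y x, ← hu]
      have hcu : u * (starRingEnd ℂ) u = (N : ℂ) := Complex.mul_conj u
      simp only [map_mul, map_neg, Complex.conj_conj, Complex.conj_ofReal]
      push_cast
      linear_combination (-2*(t:ℂ) + (t:ℂ)^2 * B ψ y y) * hcu
    rw [hexp] at h0
    obtain ⟨hre, -⟩ := Complex.nonneg_iff.1 h0
    simp only [Complex.add_re, Complex.ofReal_re, Complex.re_ofReal_mul] at hre
    linarith
  rcases eq_or_lt_of_le hry with hry0 | hry0
  · by_contra hcon
    push_neg at hcon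
    have hN0 : 0 < N := by nlinarith
    have h := key ((rx + 1) / (2 * N))
    rw [← hry0, mul_zero] at h
    have h2 : 2 * ((rx + 1) / (2 * N)) * N = rx + 1 := by
      field_simp
    linarith
  · have h := key (1 / ry)
    have ht : (1 / ry) * ry = 1 := one_div_mul_cancel (ne_of_gt hry0)
    have h2 := mul_nonneg h hry0.le
    have hexp : (rx - 2*(1/ry)*N + (1/ry)^2*N*ry)*ry
        = rx*ry - 2*N*((1/ry)*ry) + N*((1/ry)*ry)^2 := by ring
    rw [hexp, ht] at h2
    nlinarith [h2]

variable {φ : A →ₗ[ℂ] (H →L[ℂ] H)}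

theorem B_diag_le (hle : IsCPFun fun a => φ a - ψ a)
    (hdil : ∀ a : A, φ a = (adjoint S).comp ((π a).comp S)) (x : (A × H) →₀ ℂ) :
    (B ψ x x).re ≤ ‖P π S x‖ ^ 2 := by
  have h1 : 0 ≤ (B (φ - ψ) x x).re := B_re_nonneg hle x
  rw [B_map_sub, Complex.sub_re] at h1
  have h2 : (B φ x x).re = ‖P π S x‖ ^ 2 := by
    rw [B_eq_inner hdil, inner_self_eq_norm_sq_to_K]
    simp [← Complex.ofReal_pow]
  linarith

theorem B_bound (hψ : IsCPFun fun a => ψ a) (hle : IsCPFun fun a => φ a - ψ a)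
    (hdil : ∀ a : A, φ a = (adjoint S).comp ((π a).comp S)) (x y : (A × H) →₀ ℂ) :
    ‖B ψ x y‖ ≤ ‖P π S x‖ * ‖P π S y‖ := by
  have h1 := B_cauchy hψ x y
  have hx := B_diag_le (π := π) (S := S) hle hdil x
  have hy := B_diag_le (π := π) (S := S) hle hdil y
  have hrx := B_re_nonneg hψ x
  have hry := B_re_nonneg hψ y
  calc ‖B ψ x y‖ = Real.sqrt (Complex.normSq (B ψ x y)) := by rw [Complex.norm_def]
    _ ≤ Real.sqrt ((‖P π S x‖ * ‖P π S y‖) ^ 2) := by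
        refine Real.sqrt_le_sqrt ?_
        nlinarith [norm_nonneg (P π S x), norm_nonneg (P π S y)]
    _ = ‖P π S x‖ * ‖P π S y‖ := Real.sqrt_sq (by positivity)

theorem B_wd_left (hψ : IsCPFun fun a => ψ a) (hle : IsCPFun fun a => φ a - ψ a)
    (hdil : ∀ a : A, φ a = (adjoint S).comp ((π a).comp S)) {x x' : (A × H) →₀ ℂ}
    (h : P π S x = P π S x') (y : (A × H) →₀ ℂ) :
    B ψ x y = B ψ x' y := by
  have hz : P π S (x - x') = 0 := by rw [map_sub, h, sub_self]
  have h1 : (B ψ (x - x') (x - x')).re ≤ 0 := by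
    have := B_diag_le (π := π) (S := S) hle hdil (x - x')
    rw [hz] at this
    simpa using this
  have h2 := B_cauchy hψ (x - x') y
  have h3 : Complex.normSq (B ψ (x - x') y) ≤ 0 := by
    have h4 := B_re_nonneg hψ y
    nlinarith [B_re_nonneg hψ (x - x')]
  have h5 : B ψ (x - x') y = 0 := by
    have := Complex.normSq_nonneg (B ψ (x - x') y)
    have : Complex.normSq (B ψ (x - x') y) = 0 := le_antisymm h3 this
    exact Complex.normSq_eq_zero.1 this
  have h6 := B_sub_left (ψ := ψ) x x' y
  rw [h5] at h6
  linear_combination -h6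

theorem B_wd_right (hψ : IsCPFun fun a => ψ a) (hle : IsCPFun fun a => φ a - ψ a)
    (hdil : ∀ a : A, φ a = (adjoint S).comp ((π a).comp S)) {y y' : (A × H) →₀ ℂ}
    (h : P π S y = P π S y') (x : (A × H) →₀ ℂ) :
    B ψ x y = B ψ x y' := by
  rw [← B_conj hψ, ← B_conj hψ x y', B_wd_left hψ hle hdil h x]

theorem P_single (p : A × H) : P π S (Finsupp.single p 1) = π p.1 (S p.2) := by
  rw [P, Finsupp.linearCombination_single, one_smul]

theorem P_mapDomain (c : A) (x : (A × H) →₀ ℂ) :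
    P π S (x.mapDomain fun p => (c * p.1, p.2)) = π c (P π S x) := by
  classical
  rw [P, Finsupp.linearCombination_mapDomain]
  have : ((fun p : A × H => π p.1 (S p.2)) ∘ fun p : A × H => (c * p.1, p.2))
      = fun p : A × H => (π c) (π p.1 (S p.2)) := by
    funext p
    simp [map_mul, ContinuousLinearMap.mul_apply]
  rw [this]
  exact (Finsupp.apply_linearCombination ℂ
    ((π c : H₁ →L[ℂ] H₁) : H₁ →ₗ[ℂ] H₁) _ x).symm

theorem B_shift (c : A) (x y : (A × H) →₀ ℂ) :
    B ψ (x.mapDomain fun p => (star c * p.1, p.2)) y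
      = B ψ x (y.mapDomain fun p => (c * p.1, p.2)) := by
  classical
  rw [B, B, Finsupp.sum_mapDomain_index]
  · refine Finsupp.sum_congr fun p _ => ?_
    rw [Finsupp.sum_mapDomain_index]
    · refine Finsupp.sum_congr fun q _ => ?_
      congr 1
      rw [g, g]
      congr 2
      rw [star_mul, star_star, mul_assoc]
    · intro q; simp
    · intro q d d'; ring
  · intro p
    simp [Finsupp.sum]
  · intro p c₁ c₂
    rw [← Finsupp.sum_add]
    refine Finsupp.sum_congr fun q _ => ?_
    rw [map_add]; ring

theorem range_P : LinearMap.range (P π S) =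
    Submodule.span ℂ {v : H₁ | ∃ (a : A) (ξ : H), v = π a (S ξ)} := by
  rw [P, Finsupp.range_linearCombination]
  congr 1
  ext v
  constructor
  · rintro ⟨q, rfl⟩; exact ⟨q.1, q.2, rfl⟩
  · rintro ⟨a, ξ, rfl⟩; exact ⟨(a, ξ), rfl⟩

/-- Main construction: the Radon-Nikodym operator. -/
theorem main_delta (hψ : IsCPFun fun a => ψ a) (hle : IsCPFun fun a => φ a - ψ a)
    (hdil : ∀ a : A, φ a = (adjoint S).comp ((π a).comp S))
    (hmin : (Submodule.span ℂ
      {v : H₁ | ∃ (a : A) (ξ : H), v = π a (S ξ)}).topologicalClosure = ⊤) :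
    ∃ Δ : H₁ →L[ℂ] H₁,
      ∀ x y : (A × H) →₀ ℂ, ⟪P π S x, Δ (P π S y)⟫ = B ψ x y := by
  classical
  set p : Submodule ℂ H₁ :=
    Submodule.span ℂ {v : H₁ | ∃ (a : A) (ξ : H), v = π a (S ξ)} with hp
  have hmem : ∀ x : (A × H) →₀ ℂ, P π S x ∈ p := by
    intro x
    rw [hp, ← range_P]
    exact ⟨x, rfl⟩
  have hsurj : ∀ w : p, ∃ x : (A × H) →₀ ℂ, P π S x = (w : H₁) := by
    intro w
    have : (w : H₁) ∈ LinearMap.range (P π S) := by rw [range_P]; exact w.2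
    exact this
  choose rep hrep using hsurj
  have hdense : Dense (p : Set H₁) :=
    Submodule.dense_iff_topologicalClosure_eq_top.2 hmin
  have hd : DenseRange (⇑p.subtypeL) := by
    simpa [DenseRange, Subtype.range_coe] using hdense
  have hui : IsUniformInducing (⇑p.subtypeL) :=
    isUniformEmbedding_subtype_val.isUniformInducing
  have hnorm : ∀ w : p, ‖w‖ = ‖(w : H₁)‖ := fun w => rfl
  -- the continuous functional for fixed w
  have wdl : ∀ (x : (A × H) →₀ ℂ) (v : p) (y : (A × H) →₀ ℂ), P π S x = (v : H₁) →
      B ψ x y = B ψ (rep v) y := fun x v y h =>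
    B_wd_left hψ hle hdil (h.trans (hrep v).symm) y
  have wdr : ∀ (y : (A × H) →₀ ℂ) (w : p) (x : (A × H) →₀ ℂ), P π S y = (w : H₁) →
      B ψ x y = B ψ x (rep w) := fun y w x h =>
    B_wd_right hψ hle hdil (h.trans (hrep w).symm) x
  have fbound : ∀ v w : p, ‖B ψ (rep v) (rep w)‖ ≤ ‖(w : H₁)‖ * ‖(v : H₁)‖ := by
    intro v w
    have := B_bound (π := π) (S := S) hψ hle hdil (rep v) (rep w)
    rw [hrep, hrep] at this
    linarith [this]
  have fc : ∀ w : p, ∃ f : p →L[ℂ] ℂ,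
      (∀ v : p, f v = (starRingEnd ℂ) (B ψ (rep v) (rep w))) ∧ ‖f‖ ≤ ‖(w : H₁)‖ := by
    intro w
    refine ⟨LinearMap.mkContinuous
      { toFun := fun v => (starRingEnd ℂ) (B ψ (rep v) (rep w))
        map_add' := fun v v' => by
          show (starRingEnd ℂ) (B ψ (rep (v + v')) (rep w)) = _
          rw [← wdl (rep v + rep v') (v + v') (rep w)
            (by rw [map_add, hrep, hrep]; rfl), B_add_left, map_add]
        map_smul' := fun c v => by
          show (starRingEnd ℂ) (B ψ (rep (c • v)) (rep w)) = _
          rw [← wdl (c • rep v) (c • v) (rep w)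
            (by rw [map_smul, hrep]; rfl), B_smul_left, map_mul, Complex.conj_conj]
          simp } ‖(w : H₁)‖ (fun v => by
            simpa [hnorm] using fbound v w), fun v => rfl,
      LinearMap.mkContinuous_norm_le _ (norm_nonneg _) _⟩
  choose f hf hfnorm using fc
  -- the vector D w
  set D : p → H₁ := fun w =>
    (InnerProductSpace.toDual ℂ H₁).symm ((f w).extend p.subtypeL) with hD
  have hDkey : ∀ w v : p, ⟪(v : H₁), D w⟫ = B ψ (rep v) (rep w) := by
    intro w v
    have h1 : ⟪D w, (v : H₁)⟫ = ((f w).extend p.subtypeL) (v : H₁) := by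
      rw [hD]; exact InnerProductSpace.toDual_symm_apply
    have h2 : ((f w).extend p.subtypeL) (p.subtypeL v) = f w v :=
      ContinuousLinearMap.extend_eq _ hd hui _
    rw [← inner_conj_symm, h1]
    have : (p.subtypeL v : H₁) = (v : H₁) := rfl
    rw [← this, h2, hf]
    exact Complex.conj_conj _
  have hDnorm : ∀ w : p, ‖D w‖ ≤ ‖(w : H₁)‖ := by
    intro w
    rw [hD]
    rw [LinearIsometryEquiv.norm_map]
    have h2 : ∀ x : p, ‖x‖ ≤ ((1 : NNReal) : ℝ) * ‖p.subtypeL x‖ := by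
      intro x; simp [hnorm]
    calc ‖(f w).extend p.subtypeL‖ ≤ ((1 : NNReal) : ℝ) * ‖f w‖ :=
          ContinuousLinearMap.opNorm_extend_le (f w) hd h2
      _ ≤ ‖(w : H₁)‖ := by simpa using hfnorm w
  -- extension to all of H₁
  have hext0 : ∀ z : H₁, (∀ v : p, ⟪(v : H₁), z⟫ = 0) → z = 0 := by
    intro z hz
    have hzmem : z ∈ pᗮ := by
      rw [Submodule.mem_orthogonal]
      intro u hu; exact hz ⟨u, hu⟩
    rw [Submodule.topologicalClosure_eq_top_iff.1 hmin] at hzmem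
    simpa using hzmem
  have hext : ∀ z₁ z₂ : H₁, (∀ v : p, ⟪(v : H₁), z₁⟫ = ⟪(v : H₁), z₂⟫) → z₁ = z₂ := by
    intro z₁ z₂ h
    have := hext0 (z₁ - z₂) (fun v => by rw [inner_sub_right, h v, sub_self])
    rwa [sub_eq_zero] at this
  have hDadd : ∀ w w' : p, D (w + w') = D w + D w' := by
    intro w w'
    refine hext _ _ fun v => ?_
    rw [inner_add_right, hDkey, hDkey, hDkey, ← B_add_right]
    exact (wdr (rep w + rep w') (w + w') (rep v)
      (by rw [map_add, hrep, hrep]; rfl)).symm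
  have hDsmul : ∀ (c : ℂ) (w : p), D (c • w) = c • D w := by
    intro c w
    refine hext _ _ fun v => ?_
    rw [inner_smul_right, hDkey, hDkey, ← B_smul_right]
    exact (wdr (c • rep w) (c • w) (rep v) (by rw [map_smul, hrep]; rfl)).symm
  set Dc : p →L[ℂ] H₁ := LinearMap.mkContinuous
    { toFun := D, map_add' := hDadd, map_smul' := hDsmul } 1
    (fun w => by simpa [hnorm] using hDnorm w) with hDc
  refine ⟨Dc.extend p.subtypeL, ?_⟩
  intro x y
  have hx : P π S x ∈ p := hmem x
  have hy : P π S y ∈ p := hmem y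
  have h1 : (Dc.extend p.subtypeL) (P π S y) = D ⟨P π S y, hy⟩ := by
    have := ContinuousLinearMap.extend_eq Dc hd hui ⟨P π S y, hy⟩
    exact this
  rw [h1]
  have h2 : ⟪((⟨P π S x, hx⟩ : p) : H₁), D ⟨P π S y, hy⟩⟫
      = B ψ (rep ⟨P π S x, hx⟩) (rep ⟨P π S y, hy⟩) := hDkey _ _
  have h3 : B ψ (rep ⟨P π S x, hx⟩) (rep ⟨P π S y, hy⟩) = B ψ x y := by
    rw [← wdl x ⟨P π S x, hx⟩ _ rfl, ← wdr y ⟨P π S y, hy⟩ _ rfl]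
  exact h2.trans h3
end RN



/-- Radon–Nikodym theorem for completely positive maps: if `ψ ≤ φ` (i.e. `φ - ψ` is
completely positive) and `(π, H₁, S)` is the minimal Stinespring dilation of `φ`, then
there is a unique positive `Δ` in the commutant of `π(A)` with `0 ≤ Δ ≤ I` and
`ψ(a) = S* Δ π(a) S` for all `a`. -/
theorem stmt12 {A H H₁ : Type*}
    [NormedRing A] [StarRing A] [CStarRing A] [NormedAlgebra ℂ A] [StarModule ℂ A]
    [CompleteSpace A]
    [NormedAddCommGroup H] [InnerProductSpace ℂ H] [CompleteSpace H]
    [NormedAddCommGroup H₁] [InnerProductSpace ℂ H₁] [CompleteSpace H₁]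
    (φ ψ : A →ₗ[ℂ] (H →L[ℂ] H))
    (hφ : IsCPFun fun a => φ a) (hψ : IsCPFun fun a => ψ a)
    (hle : IsCPFun fun a => φ a - ψ a)
    (π : A →⋆ₐ[ℂ] (H₁ →L[ℂ] H₁)) (S : H →L[ℂ] H₁)
    (hdil : ∀ a : A, φ a = (adjoint S).comp ((π a).comp S))
    (hmin : (Submodule.span ℂ
      {v : H₁ | ∃ (a : A) (ξ : H), v = π a (S ξ)}).topologicalClosure = ⊤) :
    ∃! Δ : H₁ →L[ℂ] H₁,
      Δ.IsPositive ∧ (1 - Δ).IsPositive ∧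
      (∀ a : A, Δ.comp (π a) = (π a).comp Δ) ∧
      ∀ a : A, ψ a = (adjoint S).comp (Δ.comp ((π a).comp S)) := by
  classical
  obtain ⟨Δ, hΔ⟩ := RN.main_delta (φ := φ) (ψ := ψ) (π := π) (S := S) hψ hle hdil hmin
  set p : Submodule ℂ H₁ :=
    Submodule.span ℂ {v : H₁ | ∃ (a : A) (ξ : H), v = π a (S ξ)} with hp
  have hmem : ∀ x : (A × H) →₀ ℂ, RN.P π S x ∈ p := by
    intro x
    rw [hp, ← RN.range_P]
    exact ⟨x, rfl⟩
  have hsurj : ∀ w ∈ p, ∃ x : (A × H) →₀ ℂ, RN.P π S x = w := by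
    intro w hw
    rw [hp, ← RN.range_P] at hw
    exact hw
  have hdense : Dense (p : Set H₁) :=
    Submodule.dense_iff_topologicalClosure_eq_top.2 hmin
  have hext0 : ∀ z : H₁, (∀ x : (A × H) →₀ ℂ, (inner ℂ (RN.P π S x) z : ℂ) = 0) → z = 0 := by
    intro z hz
    have hzmem : z ∈ pᗮ := by
      rw [Submodule.mem_orthogonal]
      intro u hu
      obtain ⟨x, rfl⟩ := hsurj u hu
      exact hz x
    rw [Submodule.topologicalClosure_eq_top_iff.1 hmin] at hzmem
    simpa using hzmem
  have hext : ∀ z₁ z₂ : H₁,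
      (∀ x : (A × H) →₀ ℂ, (inner ℂ (RN.P π S x) z₁ : ℂ) = inner ℂ (RN.P π S x) z₂) → z₁ = z₂ := by
    intro z₁ z₂ h
    have := hext0 (z₁ - z₂) (fun x => by rw [inner_sub_right, h x, sub_self])
    rwa [sub_eq_zero] at this
  -- self-adjointness on the span
  have hsa_p : ∀ x y : (A × H) →₀ ℂ,
      (inner ℂ (Δ (RN.P π S x)) (RN.P π S y) : ℂ) = inner ℂ (RN.P π S x) (Δ (RN.P π S y)) := by
    intro x y
    rw [← inner_conj_symm, hΔ y x, RN.B_conj hψ, hΔ x y]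
  have hsa : IsSelfAdjoint Δ := by
    rw [ContinuousLinearMap.isSelfAdjoint_iff_isSymmetric]
    intro u v
    have step1 : ∀ (w : H₁), w ∈ p → ∀ u : H₁,
        (inner ℂ (Δ u) w : ℂ) = inner ℂ u (Δ w) := by
      intro w hw u
      obtain ⟨y, rfl⟩ := hsurj w hw
      have heqon : Set.EqOn (fun u : H₁ => (inner ℂ (Δ u) (RN.P π S y) : ℂ))
          (fun u : H₁ => (inner ℂ u (Δ (RN.P π S y)) : ℂ)) (p : Set H₁) := by
        intro u hu
        obtain ⟨x, rfl⟩ := hsurj u hu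
        exact hsa_p x y
      have heq := Continuous.ext_on hdense
        (Continuous.inner (Δ.continuous) continuous_const)
        (Continuous.inner continuous_id continuous_const) heqon
      exact congrFun heq u
    have step2 : Set.EqOn (fun w : H₁ => (inner ℂ (Δ u) w : ℂ))
        (fun w : H₁ => (inner ℂ u (Δ w) : ℂ)) (p : Set H₁) := fun w hw => step1 w hw u
    have heq := Continuous.ext_on hdense
      (Continuous.inner continuous_const continuous_id)
      (Continuous.inner continuous_const Δ.continuous) step2
    exact congrFun heq v
  -- quadratic form values
  have hquad : ∀ x : (A × H) →₀ ℂ,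
      (inner ℂ (Δ (RN.P π S x)) (RN.P π S x) : ℂ) = RN.B ψ x x := by
    intro x
    rw [hsa_p x x, hΔ x x]
  -- positivity of Δ
  have hposΔ : Δ.IsPositive := by
    refine ⟨hsa.isSymmetric, fun u => ?_⟩
    rw [ContinuousLinearMap.reApplyInnerSelf_apply]
    have hcl : IsClosed {u : H₁ | 0 ≤ RCLike.re (inner ℂ (Δ u) u : ℂ)} :=
      isClosed_le continuous_const
        (RCLike.continuous_re.comp (Continuous.inner Δ.continuous continuous_id))
    have hsub : (p : Set H₁) ⊆ {u : H₁ | 0 ≤ RCLike.re (inner ℂ (Δ u) u : ℂ)} := by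
      intro w hw
      obtain ⟨x, rfl⟩ := hsurj w hw
      have h1 : (inner ℂ (Δ (RN.P π S x)) (RN.P π S x) : ℂ) = RN.B ψ x x := hquad x
      show 0 ≤ RCLike.re (inner ℂ (Δ (RN.P π S x)) (RN.P π S x) : ℂ)
      rw [h1]
      exact RN.B_re_nonneg hψ x
    exact closure_minimal hsub hcl (hdense u)
  -- positivity of 1 - Δ
  have hpos1 : (1 - Δ).IsPositive := by
    refine ⟨((IsSelfAdjoint.one (R := H₁ →L[ℂ] H₁)).sub hsa).isSymmetric, fun u => ?_⟩
    rw [ContinuousLinearMap.reApplyInnerSelf_apply]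
    have hcl : IsClosed {u : H₁ | 0 ≤ RCLike.re (inner ℂ ((1 - Δ) u) u : ℂ)} :=
      isClosed_le continuous_const
        (RCLike.continuous_re.comp (Continuous.inner (1 - Δ).continuous continuous_id))
    have hsub : (p : Set H₁) ⊆ {u : H₁ | 0 ≤ RCLike.re (inner ℂ ((1 - Δ) u) u : ℂ)} := by
      intro w hw
      obtain ⟨x, rfl⟩ := hsurj w hw
      show 0 ≤ RCLike.re (inner ℂ ((1 - Δ) (RN.P π S x)) (RN.P π S x) : ℂ)
      rw [ContinuousLinearMap.sub_apply, ContinuousLinearMap.one_apply, inner_sub_left,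
        map_sub, hquad x]
      have h2 := RN.B_diag_le (π := π) (S := S) hle hdil x
      have h3 : RCLike.re (inner ℂ (RN.P π S x) (RN.P π S x) : ℂ) = ‖RN.P π S x‖ ^ 2 :=
        inner_self_eq_norm_sq _
      have h4 : RCLike.re (RN.B ψ x x) = (RN.B ψ x x).re := rfl
      rw [h3, h4]
      linarith
    exact closure_minimal hsub hcl (hdense u)
  -- commutation
  have hadj : ∀ c : A, adjoint (π c) = π (star c) := by
    intro c
    rw [← ContinuousLinearMap.star_eq_adjoint, ← map_star]
  have hcomm_p : ∀ (c : A) (x : (A × H) →₀ ℂ),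
      Δ (π c (RN.P π S x)) = π c (Δ (RN.P π S x)) := by
    intro c x
    refine hext _ _ fun z => ?_
    have hL : (inner ℂ (RN.P π S z) (Δ (π c (RN.P π S x))) : ℂ)
        = RN.B ψ (z.mapDomain fun q => (star c * q.1, q.2)) x := by
      rw [← RN.P_mapDomain, hΔ, ← RN.B_shift]
    have hR : (inner ℂ (RN.P π S z) (π c (Δ (RN.P π S x))) : ℂ)
        = RN.B ψ (z.mapDomain fun q => (star c * q.1, q.2)) x := by
      rw [← ContinuousLinearMap.adjoint_inner_left, hadj c, ← RN.P_mapDomain, hΔ]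
    rw [hL, hR]
  have hcomm : ∀ a : A, Δ.comp (π a) = (π a).comp Δ := by
    intro a
    apply ContinuousLinearMap.coeFn_injective
    refine Continuous.ext_on hdense (Δ.continuous.comp (π a).continuous)
      ((π a).continuous.comp Δ.continuous) ?_
    intro w hw
    obtain ⟨x, rfl⟩ := hsurj w hw
    exact hcomm_p a x
  -- generator formula
  have hgen : ∀ (b a : A) (η ξ : H),
      (inner ℂ (π b (S η)) (Δ (π a (S ξ))) : ℂ) = inner ℂ η (ψ (star b * a) ξ) := by
    intro b a η ξ
    have h1 := hΔ (Finsupp.single (b, η) 1) (Finsupp.single (a, ξ) 1)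
    rw [RN.P_single, RN.P_single] at h1
    rw [h1, RN.B_single_single]
    simp [RN.g]
  -- the dilation formula
  have hform : ∀ a : A, ψ a = (adjoint S).comp (Δ.comp ((π a).comp S)) := by
    intro a
    ext ξ
    refine ext_inner_left ℂ fun η => ?_
    rw [ContinuousLinearMap.comp_apply, ContinuousLinearMap.comp_apply,
      ContinuousLinearMap.comp_apply, ContinuousLinearMap.adjoint_inner_right]
    have hSη : S η = π 1 (S η) := by rw [map_one]; rfl
    rw [hSη, hgen 1 a η ξ, star_one, one_mul]
  refine ⟨Δ, ⟨hposΔ, hpos1, hcomm, hform⟩, ?_⟩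
  -- uniqueness
  rintro Δ' ⟨hpos', hpos1', hcomm', hform'⟩
  have hgen' : ∀ (b a : A) (η ξ : H),
      (inner ℂ (π b (S η)) (Δ' (π a (S ξ))) : ℂ) = inner ℂ η (ψ (star b * a) ξ) := by
    intro b a η ξ
    have hc : (π (star b)) (Δ' ((π a) (S ξ))) = Δ' ((π (star b * a)) (S ξ)) := by
      have h := congrFun (congrArg (DFunLike.coe) (hcomm' (star b))) ((π a) (S ξ))
      simp only [ContinuousLinearMap.comp_apply] at h
      rw [← h, map_mul, ContinuousLinearMap.mul_apply]
    calc (inner ℂ (π b (S η)) (Δ' (π a (S ξ))) : ℂ)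
        = inner ℂ (S η) ((adjoint (π b)) (Δ' (π a (S ξ)))) :=
          (ContinuousLinearMap.adjoint_inner_right (π b) (S η) _).symm
      _ = inner ℂ (S η) (Δ' (π (star b * a) (S ξ))) := by rw [hadj b, hc]
      _ = inner ℂ η ((adjoint S) (Δ' (π (star b * a) (S ξ)))) :=
          (ContinuousLinearMap.adjoint_inner_right S η _).symm
      _ = inner ℂ η (ψ (star b * a) ξ) := by
          rw [hform' (star b * a)]
          simp [ContinuousLinearMap.comp_apply]
  have hgenboth : ∀ (b a : A) (η ξ : H),
      (inner ℂ (π b (S η)) (Δ' (π a (S ξ))) : ℂ) = inner ℂ (π b (S η)) (Δ (π a (S ξ))) := by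
    intro b a η ξ
    rw [hgen', hgen]
  have hA : ∀ (a : A) (ξ : H), Δ' (π a (S ξ)) = Δ (π a (S ξ)) := by
    intro a ξ
    apply hext
    intro x
    rw [RN.P, Finsupp.linearCombination_apply, Finsupp.sum, sum_inner, sum_inner]
    refine Finset.sum_congr rfl fun q _ => ?_
    rw [inner_smul_left, inner_smul_left, hgenboth q.1 a q.2 ξ]
  have hB : ∀ x : (A × H) →₀ ℂ, Δ' (RN.P π S x) = Δ (RN.P π S x) := by
    intro x
    rw [RN.P, Finsupp.linearCombination_apply, Finsupp.sum, map_sum, map_sum]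
    refine Finset.sum_congr rfl fun q _ => ?_
    rw [map_smul, map_smul, hA q.1 q.2]
  apply ContinuousLinearMap.coeFn_injective
  refine Continuous.ext_on hdense Δ'.continuous Δ.continuous ?_
  intro w hw
  obtain ⟨x, rfl⟩ := hsurj w hw
  exact hB x
end
end

section
/- With A, H, φ as in the Radon–Nikodym theorem and (π, H^φ, S) the minimal Stinespring dilation of φ, the map Δ ↦ φ_Δ, where φ_Δ(a) := S* Δ π(a) S, is an order-preserving bijection from { Δ ∈ π(A)' : 0 ≤ Δ ≤ I } onto { ψ : A → L(H) completely positive : ψ ≤ φ }; i.e., Δ₁ ≤ Δ₂ if and only if φ_{Δ₂} − φ_{Δ₁} is completely positive. -/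
set_option maxHeartbeats 1000000
set_option synthInstance.maxHeartbeats 400000
set_option linter.unusedSectionVars false

open ContinuousLinearMap

noncomputable section

local notation "⟪" x ", " y "⟫" => inner (𝕜 := ℂ) x y

namespace RNAux

variable {H K L : Type*} [NormedAddCommGroup H] [InnerProductSpace ℂ H] [CompleteSpace H]
  [NormedAddCommGroup K] [InnerProductSpace ℂ K] [CompleteSpace K]
  [NormedAddCommGroup L] [InnerProductSpace ℂ L] [CompleteSpace L]
  {m : ℕ}

abbrev Hm (H : Type*) [NormedAddCommGroup H] (m : ℕ) := PiLp 2 (fun _ : Fin m => H)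

instance (H : Type*) [NormedAddCommGroup H] [CompleteSpace H] (m : ℕ) :
    CompleteSpace (Hm H m) :=
  inferInstance

/-- The operator on `Hᵐ` associated to a matrix of operators. -/
def mOp (M : Matrix (Fin m) (Fin m) (H →L[ℂ] K)) : Hm H m →L[ℂ] Hm K m :=
  (PiLp.continuousLinearEquiv 2 ℂ (fun _ : Fin m => K)).symm.toContinuousLinearMap.comp
    (ContinuousLinearMap.pi (fun i => ∑ j, (M i j).comp
      ((ContinuousLinearMap.proj (R := ℂ) (φ := fun _ : Fin m => H) j).comp
        (PiLp.continuousLinearEquiv 2 ℂ (fun _ : Fin m => H)).toContinuousLinearMap)))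

theorem mOp_apply (M : Matrix (Fin m) (Fin m) (H →L[ℂ] K)) (x : Hm H m) (i : Fin m) :
    mOp M x i = ∑ j, M i j (x j) := by
  simp [mOp, ContinuousLinearMap.sum_apply]

theorem inner_mOp (M : Matrix (Fin m) (Fin m) (H →L[ℂ] K)) (y : Hm K m) (x : Hm H m) :
    ⟪y, mOp M x⟫ = ∑ i, ∑ j, ⟪y i, M i j (x j)⟫ := by
  simp [PiLp.inner_apply, mOp_apply, inner_sum]

theorem mOp_comp (P : Matrix (Fin m) (Fin m) (K →L[ℂ] L))
    (Q : Matrix (Fin m) (Fin m) (H →L[ℂ] K)) :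
    mOp (Matrix.of fun i j => ∑ k, (P i k).comp (Q k j)) = (mOp P).comp (mOp Q) := by
  refine ContinuousLinearMap.ext fun x => ?_
  rw [WithLp.ext_iff]; funext i
  simp only [ContinuousLinearMap.comp_apply, mOp_apply, Matrix.of_apply,
    ContinuousLinearMap.sum_apply, map_sum]
  rw [Finset.sum_comm]

theorem mOp_adjoint (M : Matrix (Fin m) (Fin m) (H →L[ℂ] K)) :
    adjoint (mOp M) = mOp (Matrix.of fun i j => adjoint (M j i)) := by
  symm
  rw [eq_adjoint_iff]
  intro x y
  rw [← inner_conj_symm, inner_mOp, inner_mOp]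
  rw [map_sum, Finset.sum_comm]
  refine Finset.sum_congr rfl fun i _ => ?_
  rw [map_sum]
  refine Finset.sum_congr rfl fun j _ => ?_
  rw [inner_conj_symm, Matrix.of_apply, adjoint_inner_left]

/-- Continuous linear inclusion of the `j`-th coordinate. -/
def singleL (j : Fin m) : H →L[ℂ] Hm H m :=
  (PiLp.continuousLinearEquiv 2 ℂ (fun _ : Fin m => H)).symm.toContinuousLinearMap.comp
    (ContinuousLinearMap.pi (fun k => if k = j then ContinuousLinearMap.id ℂ H else 0))

theorem singleL_apply (j : Fin m) (ξ : H) (k : Fin m) :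
    singleL j ξ k = if k = j then ξ else 0 := by
  simp [singleL]
  split <;> rfl

theorem sum_singleL (x : Hm H m) : ∑ j, singleL j (x j) = x := by
  rw [WithLp.ext_iff]; funext k
  have : (∑ j, singleL j (x j)) k = ∑ j, singleL j (x j) k := by
    simp [WithLp.ofLp_sum]
  rw [this]
  simp [singleL_apply]

theorem mOp_singleL (M : Matrix (Fin m) (Fin m) (H →L[ℂ] K)) (j : Fin m) (ξ : H) (i : Fin m) :
    mOp M (singleL j ξ) i = M i j ξ := by
  rw [mOp_apply]
  have : ∀ k, M i k (singleL j ξ k) = if k = j then M i j ξ else 0 := by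
    intro k
    rw [singleL_apply]
    split
    · subst ‹k = j›; rfl
    · simp
  simp only [this]
  simp

theorem mOp_injective (M N : Matrix (Fin m) (Fin m) (H →L[ℂ] K)) (h : mOp M = mOp N) :
    M = N := by
  ext i j ξ : 3
  have := congrArg (fun T => (T : Hm H m →L[ℂ] Hm K m) (singleL j ξ) i) h
  simpa only [mOp_singleL] using this

theorem mOp_surjective (T : Hm H m →L[ℂ] Hm K m) : ∃ M, mOp M = T := by
  refine ⟨Matrix.of fun i j =>
    ((ContinuousLinearMap.proj (R := ℂ) (φ := fun _ : Fin m => K) i).comp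
      (PiLp.continuousLinearEquiv 2 ℂ (fun _ : Fin m => K)).toContinuousLinearMap).comp
      (T.comp (singleL j)), ?_⟩
  refine ContinuousLinearMap.ext fun x => ?_
  rw [WithLp.ext_iff]; funext i
  rw [mOp_apply]
  have : ∑ j, (T (singleL j (x j))) i = (∑ j, T (singleL j (x j))) i := by
    simp [WithLp.ofLp_sum]
  simpa only [ContinuousLinearMap.comp_apply, Matrix.of_apply, ContinuousLinearMap.proj_apply,
    ContinuousLinearEquiv.coe_coe, PiLp.coe_continuousLinearEquiv] using
    this.trans (by rw [← map_sum, sum_singleL])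

theorem pos_factor (P : L →L[ℂ] L) (h : P.IsPositive) :
    ∃ R : L →L[ℂ] L, P = (adjoint R).comp R := by
  have h0 : (0 : L →L[ℂ] L) ≤ P := (nonneg_iff_isPositive P).2 h
  refine ⟨CFC.sqrt P, ?_⟩
  have hs : IsSelfAdjoint (CFC.sqrt P) := (CFC.sqrt_nonneg (a := P)).isSelfAdjoint
  calc P = CFC.sqrt P * CFC.sqrt P := (CFC.sqrt_mul_sqrt_self P h0).symm
  _ = (adjoint (CFC.sqrt P)).comp (CFC.sqrt P) := by
      rw [isSelfAdjoint_iff'.mp hs]; rfl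

theorem isPositive_adjoint_comp (R : K →L[ℂ] L) : ((adjoint R).comp R).IsPositive := by
  rw [isPositive_iff_complex]
  intro x
  have : ⟪((adjoint R).comp R) x, x⟫ = ⟪R x, R x⟫ := by
    rw [ContinuousLinearMap.comp_apply, adjoint_inner_left]
  rw [this, inner_self_eq_norm_sq_to_K]
  refine ⟨?_, ?_⟩ <;> simp [← Complex.ofReal_pow] <;> positivity

theorem isPosMat_iff_mOp (M : Matrix (Fin m) (Fin m) (H →L[ℂ] H)) :
    IsPosMat M ↔ (mOp M).IsPositive := by
  constructor
  · rintro ⟨B, rfl⟩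
    have h1 : (B.conjTranspose * B) =
        Matrix.of fun i j => ∑ k, ((Matrix.of fun i j => adjoint (B j i)) i k).comp (B k j) := by
      ext i j
      simp [Matrix.mul_apply, Matrix.conjTranspose_apply, ContinuousLinearMap.star_eq_adjoint]
    rw [h1, mOp_comp, ← mOp_adjoint]
    exact isPositive_adjoint_comp (mOp B)
  · intro h
    obtain ⟨R, hR⟩ := pos_factor _ h
    obtain ⟨N, hN⟩ := mOp_surjective R
    refine ⟨N, mOp_injective _ _ ?_⟩
    have : mOp (Matrix.of fun i j => ∑ k, ((Matrix.of fun i j => adjoint (N j i)) i k).comp (N k j))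
        = (adjoint (mOp N)).comp (mOp N) := by rw [mOp_comp, ← mOp_adjoint]
    have h2 : N.conjTranspose * N =
        Matrix.of fun i j => ∑ k, ((Matrix.of fun i j => adjoint (N j i)) i k).comp (N k j) := by
      ext i j
      simp [Matrix.mul_apply, Matrix.conjTranspose_apply, ContinuousLinearMap.star_eq_adjoint]
    rw [h2, this, hN, ← hR]

theorem isPositive_iff_inner (T : L →L[ℂ] L) :
    T.IsPositive ↔ ∀ x : L, ∃ r : ℝ, 0 ≤ r ∧ ⟪x, T x⟫ = (r : ℂ) := by
  rw [isPositive_iff_complex]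
  constructor
  · intro h x
    obtain ⟨h1, h2⟩ := h x
    refine ⟨(inner (𝕜 := ℂ) (T x) x).re, h2, ?_⟩
    rw [← inner_conj_symm, ← h1]
    simp
  · intro h x
    obtain ⟨r, hr, hx⟩ := h x
    have h2 : ⟪T x, x⟫ = (r : ℂ) := by rw [← inner_conj_symm, hx]; simp
    rw [h2]
    simp [hr]

theorem posMat_row {R : Type*} [Ring R] [StarRing R] {n : ℕ} (a : Fin n → R) :
    IsPosMat (Matrix.of fun i j => star (a i) * a j) := by
  cases n with
  | zero => exact ⟨0, by ext i j; exact i.elim0⟩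
  | succ k =>
    refine ⟨Matrix.of fun i j => if i = 0 then a j else 0, ?_⟩
    ext i j
    simp only [Matrix.mul_apply, Matrix.conjTranspose_apply, Matrix.of_apply]
    rw [Finset.sum_eq_single (0 : Fin (k + 1))]
    · simp
    · intro l _ hl
      simp [hl]
    · simp

section Main

variable {A : Type*} [NormedRing A] [StarRing A] [CStarRing A] [NormedAlgebra ℂ A]
  [StarModule ℂ A] [CompleteSpace A]
  {H H₁ : Type*} [NormedAddCommGroup H] [InnerProductSpace ℂ H] [CompleteSpace H]
  [NormedAddCommGroup H₁] [InnerProductSpace ℂ H₁] [CompleteSpace H₁]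
  (π : A →⋆ₐ[ℂ] (H₁ →L[ℂ] H₁)) (S : H →L[ℂ] H₁)

theorem star_apply_eq' (b : A) (x z : H₁) : ⟪x, π (star b) z⟫ = ⟪π b x, z⟫ := by
  have h : π (star b) = adjoint (π b) := by
    rw [map_star, ContinuousLinearMap.star_eq_adjoint]
  rw [h, adjoint_inner_right]

theorem gen_inner' (Δ : H₁ →L[ℂ] H₁) (hcomm : ∀ a : A, Δ.comp (π a) = (π a).comp Δ)
    (a b : A) (ξ η : H) :
    ⟪η, adjoint S (Δ (π (star b * a) (S ξ)))⟫ = ⟪π b (S η), Δ (π a (S ξ))⟫ := by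
  have hmul : π (star b * a) (S ξ) = π (star b) (π a (S ξ)) := by
    rw [map_mul]; rfl
  have hpt : Δ (π (star b) (π a (S ξ))) = π (star b) (Δ (π a (S ξ))) :=
    ContinuousLinearMap.ext_iff.mp (hcomm (star b)) (π a (S ξ))
  rw [adjoint_inner_right, hmul, hpt, star_apply_eq']

theorem gen_inner_one (a b : A) (ξ η : H) :
    ⟪η, adjoint S (π (star b * a) (S ξ))⟫ = ⟪π b (S η), π a (S ξ)⟫ := by
  have hmul : π (star b * a) (S ξ) = π (star b) (π a (S ξ)) := by
    rw [map_mul]; rfl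
  rw [adjoint_inner_right, hmul, star_apply_eq']

theorem cp_aux (Δ : H₁ →L[ℂ] H₁) (hpos : Δ.IsPositive)
    (hcomm : ∀ a : A, Δ.comp (π a) = (π a).comp Δ) :
    IsCPFun (fun a : A => (adjoint S).comp (Δ.comp ((π a).comp S))) := by
  intro m M hM
  obtain ⟨B, rfl⟩ := hM
  rw [isPosMat_iff_mOp, isPositive_iff_inner]
  intro x
  have key : ⟪x, mOp ((B.conjTranspose * B).map
        (fun a : A => (adjoint S).comp (Δ.comp ((π a).comp S)))) x⟫
      = ∑ k, ⟪∑ i, π (B k i) (S (x i)), Δ (∑ j, π (B k j) (S (x j)))⟫ := by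
    rw [inner_mOp]
    have hterm : ∀ i j, ⟪x i, ((B.conjTranspose * B).map
          (fun a : A => (adjoint S).comp (Δ.comp ((π a).comp S)))) i j (x j)⟫
        = ∑ k, ⟪π (B k i) (S (x i)), Δ (π (B k j) (S (x j)))⟫ := by
      intro i j
      rw [Matrix.map_apply]
      have hBij : (B.conjTranspose * B) i j = ∑ k, star (B k i) * B k j := by
        simp [Matrix.mul_apply, Matrix.conjTranspose_apply]
      rw [hBij]
      have happ : ((adjoint S).comp (Δ.comp ((π (∑ k, star (B k i) * B k j)).comp S))) (x j)
          = ∑ k, adjoint S (Δ (π (star (B k i) * B k j) (S (x j)))) := by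
        simp only [ContinuousLinearMap.comp_apply, map_sum, ContinuousLinearMap.sum_apply]
      rw [happ, inner_sum]
      exact Finset.sum_congr rfl fun k _ => gen_inner' π S Δ hcomm _ _ _ _
    simp only [hterm]
    have hr : ∀ k : Fin m, ⟪∑ i, π (B k i) (S (x i)), Δ (∑ j, π (B k j) (S (x j)))⟫
        = ∑ j, ∑ i, ⟪π (B k i) (S (x i)), Δ (π (B k j) (S (x j)))⟫ := by
      intro k
      rw [map_sum, inner_sum]
      exact Finset.sum_congr rfl fun j _ => sum_inner _ _ _
    simp only [hr]
    calc (∑ i, ∑ j, ∑ k, ⟪π (B k i) (S (x i)), Δ (π (B k j) (S (x j)))⟫ : ℂ)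
        = ∑ i, ∑ k, ∑ j, ⟪π (B k i) (S (x i)), Δ (π (B k j) (S (x j)))⟫ :=
          Finset.sum_congr rfl fun i _ => Finset.sum_comm
      _ = ∑ k, ∑ i, ∑ j, ⟪π (B k i) (S (x i)), Δ (π (B k j) (S (x j)))⟫ := Finset.sum_comm
      _ = ∑ k, ∑ j, ∑ i, ⟪π (B k i) (S (x i)), Δ (π (B k j) (S (x j)))⟫ :=
          Finset.sum_congr rfl fun k _ => Finset.sum_comm
  choose r hr0 hreq using fun k => (isPositive_iff_inner Δ).mp hpos
    (∑ i, π (B k i) (S (x i)))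
  refine ⟨∑ k, r k, Finset.sum_nonneg fun k _ => hr0 k, ?_⟩
  rw [key]
  simp only [hreq]
  push_cast
  rfl

theorem span_rep (v : H₁)
    (hv : v ∈ Submodule.span ℂ {v : H₁ | ∃ (a : A) (ξ : H), v = π a (S ξ)}) :
    ∃ (n : ℕ) (a : Fin n → A) (ξ : Fin n → H), v = ∑ i, π (a i) (S (ξ i)) := by
  induction hv using Submodule.span_induction with
  | mem v hv =>
      obtain ⟨a, ξ, rfl⟩ := hv
      exact ⟨1, fun _ => a, fun _ => ξ, by simp⟩
  | zero => exact ⟨0, Fin.elim0, Fin.elim0, by simp⟩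
  | add u w _ _ ihu ihw =>
      obtain ⟨n, a, ξ, rfl⟩ := ihu
      obtain ⟨p, b, η, rfl⟩ := ihw
      refine ⟨n + p, Fin.append a b, Fin.append ξ η, ?_⟩
      rw [Fin.sum_univ_add]
      simp [Fin.append_left, Fin.append_right]
  | smul c u _ ihu =>
      obtain ⟨n, a, ξ, rfl⟩ := ihu
      refine ⟨n, a, fun i => c • ξ i, ?_⟩
      rw [Finset.smul_sum]
      simp

theorem isPositive_of_dense
    (hmin : (Submodule.span ℂ
      {v : H₁ | ∃ (a : A) (ξ : H), v = π a (S ξ)}).topologicalClosure = ⊤)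
    (T : H₁ →L[ℂ] H₁)
    (h : ∀ v ∈ Submodule.span ℂ {v : H₁ | ∃ (a : A) (ξ : H), v = π a (S ξ)},
      ∃ r : ℝ, 0 ≤ r ∧ ⟪v, T v⟫ = (r : ℂ)) : T.IsPositive := by
  set s := {v : H₁ | ∃ (a : A) (ξ : H), v = π a (S ξ)} with hs
  have hcont : Continuous fun v : H₁ => inner (𝕜 := ℂ) v (T v) :=
    Continuous.inner continuous_id T.continuous
  set C := {v : H₁ | 0 ≤ (inner (𝕜 := ℂ) v (T v)).re ∧ (inner (𝕜 := ℂ) v (T v)).im = 0}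
    with hCdef
  have hC : IsClosed C := IsClosed.inter
    (isClosed_le continuous_const (Complex.continuous_re.comp hcont))
    (isClosed_eq (Complex.continuous_im.comp hcont) continuous_const)
  have hsub : (Submodule.span ℂ s : Set H₁) ⊆ C := by
    intro v hv
    obtain ⟨r, h0, he⟩ := h v hv
    constructor
    · rw [he]; simpa using h0
    · rw [he]; simp
  have hall : ∀ v : H₁, v ∈ C := by
    have h1 : closure (Submodule.span ℂ s : Set H₁) ⊆ C := closure_minimal hsub hC
    have h2 : closure ((Submodule.span ℂ s : Set H₁)) = Set.univ := by
      rw [← Submodule.topologicalClosure_coe, hmin]; rfl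
    intro v
    exact h1 (by rw [h2]; trivial)
  rw [isPositive_iff_inner]
  intro x
  obtain ⟨h0, him⟩ := hall x
  refine ⟨(inner (𝕜 := ℂ) x (T x)).re, h0, ?_⟩
  apply Complex.ext
  · simp
  · simp [him]

theorem pos_of_cp
    (hmin : (Submodule.span ℂ
      {v : H₁ | ∃ (a : A) (ξ : H), v = π a (S ξ)}).topologicalClosure = ⊤)
    (Δ : H₁ →L[ℂ] H₁) (hcomm : ∀ a : A, Δ.comp (π a) = (π a).comp Δ)
    (hcp : IsCPFun (fun a : A => (adjoint S).comp (Δ.comp ((π a).comp S)))) :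
    Δ.IsPositive := by
  apply isPositive_of_dense π S hmin
  intro v hv
  obtain ⟨n, a, ξ, rfl⟩ := span_rep π S v hv
  set x : Hm H n := (WithLp.equiv 2 (∀ _ : Fin n, H)).symm ξ with hx
  have hM : IsPosMat (((Matrix.of fun i j => star (a i) * a j)).map
      (fun a : A => (adjoint S).comp (Δ.comp ((π a).comp S)))) :=
    hcp n _ (posMat_row a)
  have hP := (isPosMat_iff_mOp _).1 hM
  obtain ⟨r, h0, he⟩ := (isPositive_iff_inner _).1 hP x
  refine ⟨r, h0, ?_⟩
  rw [← he, inner_mOp, sum_inner]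
  refine Finset.sum_congr rfl fun i _ => ?_
  rw [map_sum, inner_sum]
  refine Finset.sum_congr rfl fun j _ => ?_
  rw [Matrix.map_apply, Matrix.of_apply]
  rw [← gen_inner' π S Δ hcomm (a j) (a i) (ξ j) (ξ i)]
  rfl

theorem ext_dense
    (hmin : (Submodule.span ℂ
      {v : H₁ | ∃ (a : A) (ξ : H), v = π a (S ξ)}).topologicalClosure = ⊤)
    (T : H₁ →L[ℂ] H₁)
    (h : ∀ (a b : A) (ξ η : H), ⟪π b (S η), T (π a (S ξ))⟫ = 0) : T = 0 := by
  set s := {v : H₁ | ∃ (a : A) (ξ : H), v = π a (S ξ)} with hs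
  have hKbot : (Submodule.span ℂ s)ᗮ = ⊥ :=
    (Submodule.topologicalClosure_eq_top_iff).1 hmin
  have hgen : ∀ v ∈ s, T v = 0 := by
    rintro v ⟨a, ξ, rfl⟩
    have hmem : T (π a (S ξ)) ∈ (Submodule.span ℂ s)ᗮ := by
      rw [Submodule.mem_orthogonal]
      intro u hu
      induction hu using Submodule.span_induction with
      | mem w hw =>
          obtain ⟨b, η, rfl⟩ := hw
          exact h a b ξ η
      | zero => rw [inner_zero_left]
      | add u w _ _ ihu ihw => rw [inner_add_left, ihu, ihw, add_zero]
      | smul c u _ ihu => rw [inner_smul_left, ihu, mul_zero]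
    rw [hKbot] at hmem
    simpa using hmem
  have h1 : s ⊆ ((LinearMap.ker (T : H₁ →ₗ[ℂ] H₁) : Submodule ℂ H₁) : Set H₁) := fun v hv => by simpa using hgen v hv
  have h2 : Submodule.span ℂ s ≤ LinearMap.ker (T : H₁ →ₗ[ℂ] H₁) := Submodule.span_le.2 h1
  have h3 : (Submodule.span ℂ s).topologicalClosure ≤ LinearMap.ker (T : H₁ →ₗ[ℂ] H₁) :=
    Submodule.topologicalClosure_minimal _ h2 (ContinuousLinearMap.isClosed_ker T)
  rw [hmin] at h3
  ext v
  simpa using LinearMap.mem_ker.1 (h3 (Submodule.mem_top))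

theorem vec_eq_of_inner
    (hmin : (Submodule.span ℂ
      {v : H₁ | ∃ (a : A) (ξ : H), v = π a (S ξ)}).topologicalClosure = ⊤)
    (z₁ z₂ : H₁)
    (h : ∀ w ∈ Submodule.span ℂ {v : H₁ | ∃ (a : A) (ξ : H), v = π a (S ξ)},
      ⟪w, z₁⟫ = ⟪w, z₂⟫) : z₁ = z₂ := by
  set s := {v : H₁ | ∃ (a : A) (ξ : H), v = π a (S ξ)} with hs
  have hKbot : (Submodule.span ℂ s)ᗮ = ⊥ :=
    (Submodule.topologicalClosure_eq_top_iff).1 hmin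
  have hmem : z₁ - z₂ ∈ (Submodule.span ℂ s)ᗮ := by
    rw [Submodule.mem_orthogonal]
    intro u hu
    rw [inner_sub_right, h u hu, sub_self]
  rw [hKbot] at hmem
  have := Submodule.mem_bot ℂ |>.1 hmem
  exact sub_eq_zero.1 this

/-- Formal finite families representing vectors in the span. -/
def Rep (A H : Type*) : Type _ := Σ n : ℕ, (Fin n → A) × (Fin n → H)

def Rep.cat {A H : Type*} (p q : Rep A H) : Rep A H :=
  ⟨p.1 + q.1, Fin.append p.2.1 q.2.1, Fin.append p.2.2 q.2.2⟩

def Rep.msmul {A H : Type*} [SMul ℂ H] (c : ℂ) (p : Rep A H) : Rep A H :=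
  ⟨p.1, p.2.1, fun i => c • p.2.2 i⟩

variable (ψ : A → (H →L[ℂ] H))

def vecR (p : Rep A H) : H₁ := ∑ i, π (p.2.1 i) (S (p.2.2 i))

def QR (p q : Rep A H) : ℂ :=
  ∑ i, ∑ j, ⟪p.2.2 i, ψ (star (p.2.1 i) * q.2.1 j) (q.2.2 j)⟫

theorem vecR_cat (p q : Rep A H) : vecR π S (p.cat q) = vecR π S p + vecR π S q := by
  show (∑ i : Fin (p.1 + q.1), π (Fin.append p.2.1 q.2.1 i)
    (S (Fin.append p.2.2 q.2.2 i))) = _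
  rw [Fin.sum_univ_add]
  simp [Fin.append_left, Fin.append_right, vecR]

theorem vecR_msmul (c : ℂ) (p : Rep A H) : vecR π S (Rep.msmul c p) = c • vecR π S p := by
  show (∑ i, π (p.2.1 i) (S (c • p.2.2 i))) = _
  rw [vecR, Finset.smul_sum]
  simp

theorem vecR_mem (p : Rep A H) :
    vecR π S p ∈ Submodule.span ℂ {v : H₁ | ∃ (a : A) (ξ : H), v = π a (S ξ)} :=
  Submodule.sum_mem _ fun i _ =>
    Submodule.subset_span ⟨p.2.1 i, p.2.2 i, rfl⟩

theorem QR_cat_left (p q r : Rep A H) :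
    QR ψ (p.cat q) r = QR ψ p r + QR ψ q r := by
  show (∑ i : Fin (p.1 + q.1), ∑ j, ⟪Fin.append p.2.2 q.2.2 i,
    ψ (star (Fin.append p.2.1 q.2.1 i) * r.2.1 j) (r.2.2 j)⟫) = _
  rw [Fin.sum_univ_add]
  simp [Fin.append_left, Fin.append_right, QR]

theorem QR_cat_right (p q r : Rep A H) :
    QR ψ p (q.cat r) = QR ψ p q + QR ψ p r := by
  show (∑ i, ∑ j : Fin (q.1 + r.1), ⟪p.2.2 i,
    ψ (star (p.2.1 i) * Fin.append q.2.1 r.2.1 j) (Fin.append q.2.2 r.2.2 j)⟫) = _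
  have hrow : ∀ i, (∑ j : Fin (q.1 + r.1), ⟪p.2.2 i,
      ψ (star (p.2.1 i) * Fin.append q.2.1 r.2.1 j) (Fin.append q.2.2 r.2.2 j)⟫)
      = (∑ j : Fin q.1, ⟪p.2.2 i, ψ (star (p.2.1 i) * q.2.1 j) (q.2.2 j)⟫)
        + ∑ j : Fin r.1, ⟪p.2.2 i, ψ (star (p.2.1 i) * r.2.1 j) (r.2.2 j)⟫ := by
    intro i
    rw [Fin.sum_univ_add]
    simp [Fin.append_left, Fin.append_right]
  simp only [hrow]
  rw [Finset.sum_add_distrib]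
  rfl

theorem QR_msmul_left (c : ℂ) (p q : Rep A H) :
    QR ψ (Rep.msmul c p) q = (starRingEnd ℂ) c * QR ψ p q := by
  show (∑ i, ∑ j, ⟪c • p.2.2 i, ψ (star (p.2.1 i) * q.2.1 j) (q.2.2 j)⟫) = _
  rw [QR, Finset.mul_sum]
  refine Finset.sum_congr rfl fun i _ => ?_
  rw [Finset.mul_sum]
  refine Finset.sum_congr rfl fun j _ => ?_
  rw [inner_smul_left]

theorem QR_msmul_right (c : ℂ) (p q : Rep A H) :
    QR ψ p (Rep.msmul c q) = c * QR ψ p q := by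
  show (∑ i, ∑ j, ⟪p.2.2 i, ψ (star (p.2.1 i) * q.2.1 j) (c • q.2.2 j)⟫) = _
  rw [QR, Finset.mul_sum]
  refine Finset.sum_congr rfl fun i _ => ?_
  rw [Finset.mul_sum]
  refine Finset.sum_congr rfl fun j _ => ?_
  rw [map_smul, inner_smul_right]

theorem QR_zero_left (p q : Rep A H) (h : ∀ i, p.2.2 i = 0) : QR ψ p q = 0 := by
  rw [QR]
  refine Finset.sum_eq_zero fun i _ => Finset.sum_eq_zero fun j _ => ?_
  rw [h i, inner_zero_left]

theorem QR_zero_right (p q : Rep A H) (h : ∀ j, q.2.2 j = 0) : QR ψ p q = 0 := by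
  rw [QR]
  refine Finset.sum_eq_zero fun i _ => Finset.sum_eq_zero fun j _ => ?_
  rw [h j, map_zero, inner_zero_right]

theorem QR_inner_mOp {n : ℕ} (aa : Fin n → A) (u v : Fin n → H) :
    QR ψ ⟨n, aa, u⟩ ⟨n, aa, v⟩ =
      ⟪(WithLp.equiv 2 (∀ _ : Fin n, H)).symm u,
        mOp (((Matrix.of fun i j => star (aa i) * aa j)).map ψ)
          ((WithLp.equiv 2 (∀ _ : Fin n, H)).symm v)⟫ := by
  rw [inner_mOp]
  rfl

theorem QR_self (hcp : IsCPFun ψ)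
    (hcpd : IsCPFun fun a : A => (adjoint S).comp ((π a).comp S) - ψ a) (p : Rep A H) :
    ∃ r : ℝ, 0 ≤ r ∧ QR ψ p p = (r : ℂ) ∧ r ≤ ‖vecR π S p‖ ^ 2 := by
  obtain ⟨n, a, ξ⟩ := p
  set x : Hm H n := (WithLp.equiv 2 (∀ _ : Fin n, H)).symm ξ with hxdef
  obtain ⟨r, h0, he⟩ := (isPositive_iff_inner _).1
    ((isPosMat_iff_mOp _).1 (hcp n _ (posMat_row a))) x
  obtain ⟨r', h0', he'⟩ := (isPositive_iff_inner _).1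
    ((isPosMat_iff_mOp _).1 (hcpd n _ (posMat_row a))) x
  have e1 : QR ψ ⟨n, a, ξ⟩ ⟨n, a, ξ⟩ = (r : ℂ) := by
    rw [QR_inner_mOp]; exact he
  have e2 : ⟪x, mOp (((Matrix.of fun i j => star (a i) * a j)).map
        (fun a : A => (adjoint S).comp ((π a).comp S) - ψ a)) x⟫
      = ((‖vecR π S ⟨n, a, ξ⟩‖ ^ 2 : ℝ) : ℂ) - QR ψ ⟨n, a, ξ⟩ ⟨n, a, ξ⟩ := by
    rw [inner_mOp]
    have hterm : ∀ i j : Fin n,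
        ⟪x i, (((Matrix.of fun i j => star (a i) * a j)).map
          (fun a : A => (adjoint S).comp ((π a).comp S) - ψ a)) i j (x j)⟫
        = ⟪π (a i) (S (ξ i)), π (a j) (S (ξ j))⟫
          - ⟪ξ i, ψ (star (a i) * a j) (ξ j)⟫ := by
      intro i j
      rw [Matrix.map_apply, Matrix.of_apply, ContinuousLinearMap.sub_apply, inner_sub_right]
      congr 1
      exact gen_inner_one π S (a j) (a i) (ξ j) (ξ i)
    simp only [hterm]
    simp only [Finset.sum_sub_distrib]
    congr 1
    · have : (∑ i, ∑ j, ⟪π (a i) (S (ξ i)), π (a j) (S (ξ j))⟫ : ℂ)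
          = ⟪vecR π S ⟨n, a, ξ⟩, vecR π S ⟨n, a, ξ⟩⟫ := by
        rw [show vecR π S ⟨n, a, ξ⟩ = ∑ i, π (a i) (S (ξ i)) from rfl, sum_inner]
        exact Finset.sum_congr rfl fun i _ => (inner_sum _ _ _).symm
      rw [this, inner_self_eq_norm_sq_to_K]
      norm_cast
  refine ⟨r, h0, e1, ?_⟩
  have : (r' : ℂ) = ((‖vecR π S ⟨n, a, ξ⟩‖ ^ 2 : ℝ) : ℂ) - (r : ℂ) := by
    rw [← he', e2, e1]
  have hre : r' = ‖vecR π S ⟨n, a, ξ⟩‖ ^ 2 - r := by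
    exact_mod_cast this
  linarith

theorem QR_cs (hcp : IsCPFun ψ) (p q : Rep A H) :
    ‖QR ψ p q‖ ^ 2 ≤ (QR ψ p p).re * (QR ψ q q).re := by
  classical
  set p0 : Rep A H := ⟨p.1, p.2.1, fun _ => 0⟩ with hp0
  set q0 : Rep A H := ⟨q.1, q.2.1, fun _ => 0⟩ with hq0
  set aa : Fin (p.1 + q.1) → A := Fin.append p.2.1 q.2.1 with haa
  have hMpos := (isPosMat_iff_mOp _).1 (hcp (p.1 + q.1) _ (posMat_row aa))
  obtain ⟨R, hR⟩ := pos_factor _ hMpos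
  set x : Hm H (p.1 + q.1) := (WithLp.equiv 2 (∀ _ : Fin (p.1 + q.1), H)).symm
    (Fin.append p.2.2 (fun _ => 0)) with hxd
  set y : Hm H (p.1 + q.1) := (WithLp.equiv 2 (∀ _ : Fin (p.1 + q.1), H)).symm
    (Fin.append (fun _ => 0) q.2.2) with hyd
  have hx : QR ψ (p.cat q0) (p.cat q0)
      = ⟪x, mOp (((Matrix.of fun i j => star (aa i) * aa j)).map ψ) x⟫ :=
    QR_inner_mOp ψ aa _ _
  have hy : QR ψ (p0.cat q) (p0.cat q)
      = ⟪y, mOp (((Matrix.of fun i j => star (aa i) * aa j)).map ψ) y⟫ :=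
    QR_inner_mOp ψ aa _ _
  have hxy : QR ψ (p.cat q0) (p0.cat q)
      = ⟪x, mOp (((Matrix.of fun i j => star (aa i) * aa j)).map ψ) y⟫ :=
    QR_inner_mOp ψ aa _ _
  have ex : QR ψ (p.cat q0) (p.cat q0) = QR ψ p p := by
    rw [QR_cat_left, QR_cat_right, QR_cat_right]
    rw [QR_zero_left ψ q0 p (fun _ => rfl), QR_zero_right ψ p q0 (fun _ => rfl),
      QR_zero_left ψ q0 q0 (fun _ => rfl)]
    ring
  have ey : QR ψ (p0.cat q) (p0.cat q) = QR ψ q q := by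
    rw [QR_cat_left, QR_cat_right, QR_cat_right]
    rw [QR_zero_left ψ p0 p0 (fun _ => rfl), QR_zero_left ψ p0 q (fun _ => rfl),
      QR_zero_right ψ q p0 (fun _ => rfl)]
    ring
  have exy : QR ψ (p.cat q0) (p0.cat q) = QR ψ p q := by
    rw [QR_cat_left, QR_cat_right, QR_cat_right]
    rw [QR_zero_left ψ q0 p0 (fun _ => rfl), QR_zero_left ψ q0 q (fun _ => rfl),
      QR_zero_right ψ p p0 (fun _ => rfl)]
    ring
  have hinner : ⟪x, mOp (((Matrix.of fun i j => star (aa i) * aa j)).map ψ) y⟫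
      = ⟪R x, R y⟫ := by
    rw [hR, ContinuousLinearMap.comp_apply, adjoint_inner_right]
  have hnx : ‖R x‖ ^ 2 = (QR ψ p p).re := by
    rw [← ex, hx, hR]
    exact apply_norm_sq_eq_inner_adjoint_right R x
  have hny : ‖R y‖ ^ 2 = (QR ψ q q).re := by
    rw [← ey, hy, hR]
    exact apply_norm_sq_eq_inner_adjoint_right R y
  have hq : ‖QR ψ p q‖ ≤ ‖R x‖ * ‖R y‖ := by
    rw [← exy, hxy, hinner]
    exact norm_inner_le_norm _ _
  have h2 : ‖QR ψ p q‖ ^ 2 ≤ (‖R x‖ * ‖R y‖) ^ 2 := by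
    have := norm_nonneg (QR ψ p q)
    nlinarith
  calc ‖QR ψ p q‖ ^ 2 ≤ (‖R x‖ * ‖R y‖) ^ 2 := h2
    _ = (QR ψ p p).re * (QR ψ q q).re := by rw [mul_pow, hnx, hny]

theorem QR_bound (hcp : IsCPFun ψ)
    (hcpd : IsCPFun fun a : A => (adjoint S).comp ((π a).comp S) - ψ a) (p q : Rep A H) :
    ‖QR ψ p q‖ ≤ ‖vecR π S p‖ * ‖vecR π S q‖ := by
  obtain ⟨rp, hp0, hpe, hpb⟩ := QR_self π S ψ hcp hcpd p
  obtain ⟨rq, hq0, hqe, hqb⟩ := QR_self π S ψ hcp hcpd q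
  have hcs := QR_cs ψ hcp p q
  rw [hpe, hqe] at hcs
  simp only [Complex.ofReal_re] at hcs
  have hnp := norm_nonneg (vecR π S p)
  have hnq := norm_nonneg (vecR π S q)
  have hn := norm_nonneg (QR ψ p q)
  nlinarith [mul_nonneg hnp hnq, sq_nonneg (‖vecR π S p‖ * ‖vecR π S q‖ - ‖QR ψ p q‖)]

theorem QR_welldef (hcp : IsCPFun ψ)
    (hcpd : IsCPFun fun a : A => (adjoint S).comp ((π a).comp S) - ψ a)
    (p p' q : Rep A H) (h : vecR π S p = vecR π S p') :
    QR ψ p q = QR ψ p' q ∧ QR ψ q p = QR ψ q p' := by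
  set d : Rep A H := p.cat (Rep.msmul (-1) p') with hd
  have hvd : vecR π S d = 0 := by
    rw [hd, vecR_cat, vecR_msmul, h]
    simp
  obtain ⟨r, h0, he, hub⟩ := QR_self π S ψ hcp hcpd d
  have hr0 : r = 0 := by
    rw [hvd] at hub
    simp at hub
    linarith
  have hdd : QR ψ d d = 0 := by rw [he, hr0]; simp
  obtain ⟨rq, hq0, hqe, _⟩ := QR_self π S ψ hcp hcpd q
  have hdq : QR ψ d q = 0 := by
    have hcs := QR_cs ψ hcp d q
    rw [hdd, hqe] at hcs
    simp only [Complex.zero_re, Complex.ofReal_re, zero_mul] at hcs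
    have h1 : ‖QR ψ d q‖ = 0 := by nlinarith [norm_nonneg (QR ψ d q)]
    exact norm_eq_zero.1 h1
  have hqd : QR ψ q d = 0 := by
    have hcs := QR_cs ψ hcp q d
    rw [hdd, hqe] at hcs
    simp only [Complex.zero_re, Complex.ofReal_re, mul_zero] at hcs
    have h1 : ‖QR ψ q d‖ = 0 := by nlinarith [norm_nonneg (QR ψ q d)]
    exact norm_eq_zero.1 h1
  constructor
  · have h2 := hdq
    rw [hd, QR_cat_left, QR_msmul_left] at h2
    simp only [map_neg, map_one, neg_mul, one_mul] at h2
    linear_combination h2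
  · have h2 := hqd
    rw [hd, QR_cat_right, QR_msmul_right] at h2
    linear_combination h2

theorem surj_aux
    (hmin : (Submodule.span ℂ
      {v : H₁ | ∃ (a : A) (ξ : H), v = π a (S ξ)}).topologicalClosure = ⊤)
    (hcp : IsCPFun ψ)
    (hcpd : IsCPFun fun a : A => (adjoint S).comp ((π a).comp S) - ψ a) :
    ∃ Δ : H₁ →L[ℂ] H₁, Δ.IsPositive ∧ (1 - Δ).IsPositive ∧
      (∀ a : A, Δ.comp (π a) = (π a).comp Δ) ∧
      (fun a : A => (adjoint S).comp (Δ.comp ((π a).comp S))) = ψ := by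
  classical
  set s := {v : H₁ | ∃ (a : A) (ξ : H), v = π a (S ξ)} with hs
  set K := Submodule.span ℂ s with hKdef
  have hrep0 : ∀ v : K, ∃ p : Rep A H, vecR π S p = (v : H₁) := by
    intro v
    obtain ⟨n, a, ξ, hv⟩ := span_rep π S v v.2
    exact ⟨⟨n, a, ξ⟩, hv.symm⟩
  choose rep hrep using hrep0
  have hQrw : ∀ (p q : Rep A H) (w v : K), vecR π S p = (w : H₁) → vecR π S q = (v : H₁) →
      QR ψ p q = QR ψ (rep w) (rep v) := by
    intro p q w v hw hv
    have h1 : QR ψ p q = QR ψ (rep w) q :=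
      (QR_welldef π S ψ hcp hcpd p (rep w) q (by rw [hw, hrep w])).1
    have h2 : QR ψ (rep w) q = QR ψ (rep w) (rep v) :=
      (QR_welldef π S ψ hcp hcpd q (rep v) (rep w) (by rw [hv, hrep v])).2
    rw [h1, h2]
  -- dense isometric embedding of K
  have hbnd : ∀ x : K, ‖x‖ ≤ ((1 : NNReal) : ℝ) * ‖K.subtypeL x‖ := by
    intro x
    simp [Submodule.coe_norm]
  have hdense : DenseRange (K.subtypeL) := by
    have h2 : closure ((K : Set H₁)) = Set.univ := by
      rw [← Submodule.topologicalClosure_coe, hKdef, hmin]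
      rfl
    have h1 : Set.range (K.subtypeL) = (K : Set H₁) := Subtype.range_coe
    rw [DenseRange, h1]
    rw [dense_iff_closure_eq, h2]
  -- construction of the vector u v for v ∈ K
  have hexu : ∀ v : K, ∃ u : H₁,
      (∀ w : K, ⟪(w : H₁), u⟫ = QR ψ (rep w) (rep v)) ∧ ‖u‖ ≤ ‖(v : H₁)‖ := by
    intro v
    have gadd : ∀ w w' : K, QR ψ (rep (w + w')) (rep v)
        = QR ψ (rep w) (rep v) + QR ψ (rep w') (rep v) := by
      intro w w'
      have h1 : QR ψ ((rep w).cat (rep w')) (rep v) = QR ψ (rep (w + w')) (rep v) := by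
        refine hQrw _ _ (w + w') v ?_ (hrep v)
        rw [vecR_cat, hrep w, hrep w']
        rfl
      rw [← h1, QR_cat_left]
    have gsmul : ∀ (c : ℂ) (w : K), QR ψ (rep (c • w)) (rep v)
        = (starRingEnd ℂ) c * QR ψ (rep w) (rep v) := by
      intro c w
      have h1 : QR ψ (Rep.msmul c (rep w)) (rep v) = QR ψ (rep (c • w)) (rep v) := by
        refine hQrw _ _ (c • w) v ?_ (hrep v)
        rw [vecR_msmul, hrep w]
        rfl
      rw [← h1, QR_msmul_left]
    set g : K →ₗ[ℂ] ℂ :=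
      { toFun := fun w => (starRingEnd ℂ) (QR ψ (rep w) (rep v))
        map_add' := by
          intro w w'
          simp only [gadd, map_add]
        map_smul' := by
          intro c w
          simp only [gsmul, map_mul, RingHom.id_apply, smul_eq_mul]
          rw [starRingEnd_self_apply]
      } with hgdef
    have hgb : ∀ w : K, ‖g w‖ ≤ ‖(v : H₁)‖ * ‖w‖ := by
      intro w
      have hb := QR_bound π S ψ hcp hcpd (rep w) (rep v)
      rw [hrep w, hrep v] at hb
      have hng : ‖g w‖ = ‖QR ψ (rep w) (rep v)‖ := by
        simp [hgdef, RCLike.norm_conj]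
      rw [hng, Submodule.coe_norm]
      calc ‖QR ψ (rep w) (rep v)‖ ≤ ‖(w : H₁)‖ * ‖(v : H₁)‖ := hb
        _ = ‖(v : H₁)‖ * ‖(w : H₁)‖ := mul_comm _ _
    set gc : K →L[ℂ] ℂ := LinearMap.mkContinuous g ‖(v : H₁)‖ hgb with hgc
    set ge : H₁ →L[ℂ] ℂ := gc.extend K.subtypeL
      with hge
    refine ⟨(InnerProductSpace.toDual ℂ H₁).symm ge, ?_, ?_⟩
    · intro w
      have h1 : ⟪((InnerProductSpace.toDual ℂ H₁).symm ge), (w : H₁)⟫ = ge (w : H₁) :=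
        InnerProductSpace.toDual_symm_apply
      have h2 : ge ((w : H₁)) = gc w := by
        have h3 : (w : H₁) = K.subtypeL w := rfl
        rw [h3, hge]
        exact ContinuousLinearMap.extend_eq gc hdense
          (ContinuousLinearMap.isUniformEmbedding_of_bound K.subtypeL hbnd).isUniformInducing w
      rw [← inner_conj_symm, h1, h2]
      have h4 : gc w = (starRingEnd ℂ) (QR ψ (rep w) (rep v)) := rfl
      rw [h4, starRingEnd_self_apply]
    · have h3 : ‖ge‖ ≤ ((1 : NNReal) : ℝ) * ‖gc‖ :=
        ContinuousLinearMap.opNorm_extend_le gc hdense hbnd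
      have h4 : ‖gc‖ ≤ ‖(v : H₁)‖ :=
        LinearMap.mkContinuous_norm_le g (norm_nonneg _) hgb
      have h5 : ‖(InnerProductSpace.toDual ℂ H₁).symm ge‖ = ‖ge‖ :=
        LinearIsometryEquiv.norm_map _ ge
      rw [h5]
      calc ‖ge‖ ≤ ((1 : NNReal) : ℝ) * ‖gc‖ := h3
        _ = ‖gc‖ := by norm_num
        _ ≤ ‖(v : H₁)‖ := h4
  choose u hu hub using hexu
  -- linearity of u
  have huadd : ∀ v v' : K, u (v + v') = u v + u v' := by
    intro v v'
    apply vec_eq_of_inner π S hmin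
    intro w hw
    have h1 := hu (v + v') ⟨w, hw⟩
    have h2 : QR ψ (rep ⟨w, hw⟩) ((rep v).cat (rep v'))
        = QR ψ (rep ⟨w, hw⟩) (rep (v + v')) := by
      refine hQrw _ _ ⟨w, hw⟩ (v + v') (hrep _) ?_
      rw [vecR_cat, hrep v, hrep v']
      rfl
    rw [h1, ← h2, QR_cat_right, inner_add_right, hu v ⟨w, hw⟩, hu v' ⟨w, hw⟩]
  have husmul : ∀ (c : ℂ) (v : K), u (c • v) = c • u v := by
    intro c v
    apply vec_eq_of_inner π S hmin
    intro w hw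
    have h1 := hu (c • v) ⟨w, hw⟩
    have h2 : QR ψ (rep ⟨w, hw⟩) (Rep.msmul c (rep v))
        = QR ψ (rep ⟨w, hw⟩) (rep (c • v)) := by
      refine hQrw _ _ ⟨w, hw⟩ (c • v) (hrep _) ?_
      rw [vecR_msmul, hrep v]
      rfl
    rw [h1, ← h2, QR_msmul_right, inner_smul_right, hu v ⟨w, hw⟩]
  set Δ₀ : K →L[ℂ] H₁ := LinearMap.mkContinuous
    { toFun := u
      map_add' := huadd
      map_smul' := by
        intro c v
        simp only [RingHom.id_apply]
        exact husmul c v } 1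
    (fun v => by
      rw [one_mul, Submodule.coe_norm]
      exact hub v) with hΔ₀
  set Δ : H₁ →L[ℂ] H₁ := Δ₀.extend K.subtypeL
    with hΔdef
  have hΔval : ∀ v : K, Δ (v : H₁) = u v := by
    intro v
    have h3 : (v : H₁) = K.subtypeL v := rfl
    rw [h3, hΔdef]
    exact ContinuousLinearMap.extend_eq Δ₀ hdense
      (ContinuousLinearMap.isUniformEmbedding_of_bound K.subtypeL hbnd).isUniformInducing v
  have hchar : ∀ (w v : K), ⟪(w : H₁), Δ (v : H₁)⟫ = QR ψ (rep w) (rep v) := by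
    intro w v
    rw [hΔval v]
    exact hu v w
  -- generator characterization
  have hgen : ∀ (a b : A) (ξ η : H),
      ⟪π b (S η), Δ (π a (S ξ))⟫ = ⟪η, ψ (star b * a) ξ⟫ := by
    intro a b ξ η
    have hva : π a (S ξ) ∈ K := Submodule.subset_span ⟨a, ξ, rfl⟩
    have hvb : π b (S η) ∈ K := Submodule.subset_span ⟨b, η, rfl⟩
    have h1 := hchar ⟨π b (S η), hvb⟩ ⟨π a (S ξ), hva⟩
    have h2 : QR ψ (⟨1, fun _ => b, fun _ => η⟩ : Rep A H) (⟨1, fun _ => a, fun _ => ξ⟩ : Rep A H)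
        = QR ψ (rep ⟨π b (S η), hvb⟩) (rep ⟨π a (S ξ), hva⟩) := by
      refine hQrw _ _ ⟨π b (S η), hvb⟩ ⟨π a (S ξ), hva⟩ ?_ ?_
      · show (∑ i : Fin 1, π b (S η)) = π b (S η)
        simp
      · show (∑ i : Fin 1, π a (S ξ)) = π a (S ξ)
        simp
    have h3 : QR ψ (⟨1, fun _ => b, fun _ => η⟩ : Rep A H)
        (⟨1, fun _ => a, fun _ => ξ⟩ : Rep A H) = ⟪η, ψ (star b * a) ξ⟫ := by
      show (∑ i : Fin 1, ∑ j : Fin 1, ⟪η, ψ (star b * a) ξ⟫) = _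
      simp
    rw [h1, ← h2, h3]
  -- values of the quadratic form on K
  have hself : ∀ v, v ∈ K → ∃ r : ℝ, 0 ≤ r ∧ ⟪v, Δ v⟫ = (r : ℂ) ∧ r ≤ ‖v‖ ^ 2 := by
    intro v hv
    obtain ⟨r, h0, he, hb⟩ := QR_self π S ψ hcp hcpd (rep ⟨v, hv⟩)
    have h1 : ⟪v, Δ v⟫ = QR ψ (rep ⟨v, hv⟩) (rep ⟨v, hv⟩) := hchar ⟨v, hv⟩ ⟨v, hv⟩
    rw [hrep ⟨v, hv⟩] at hb
    exact ⟨r, h0, by rw [h1, he], hb⟩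
  have hpos : Δ.IsPositive := by
    apply isPositive_of_dense π S hmin
    intro v hv
    obtain ⟨r, h0, he, _⟩ := hself v hv
    exact ⟨r, h0, he⟩
  have hpos1 : (1 - Δ).IsPositive := by
    apply isPositive_of_dense π S hmin
    intro v hv
    obtain ⟨r, h0, he, hb⟩ := hself v hv
    refine ⟨‖v‖ ^ 2 - r, by linarith, ?_⟩
    have hvv : ⟪v, v⟫ = ((‖v‖ ^ 2 : ℝ) : ℂ) := by
      rw [inner_self_eq_norm_sq_to_K]
      norm_cast
    rw [ContinuousLinearMap.sub_apply, ContinuousLinearMap.one_apply, inner_sub_right, he, hvv]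
    push_cast
    ring
  have hcomm : ∀ c : A, Δ.comp (π c) = (π c).comp Δ := by
    intro c
    have hz := ext_dense π S hmin (Δ.comp (π c) - (π c).comp Δ) ?_
    · rwa [sub_eq_zero] at hz
    intro a b ξ η
    rw [ContinuousLinearMap.sub_apply, ContinuousLinearMap.comp_apply,
      ContinuousLinearMap.comp_apply, inner_sub_right]
    have e1 : ⟪π b (S η), Δ (π c (π a (S ξ)))⟫ = ⟪η, ψ (star b * (c * a)) ξ⟫ := by
      have h7 : π c (π a (S ξ)) = π (c * a) (S ξ) := by rw [map_mul]; rfl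
      rw [h7]
      exact hgen (c * a) b ξ η
    have e2 : ⟪π b (S η), π c (Δ (π a (S ξ)))⟫ = ⟪η, ψ (star b * (c * a)) ξ⟫ := by
      have h4 : ⟪π b (S η), π c (Δ (π a (S ξ)))⟫
          = ⟪π (star c) (π b (S η)), Δ (π a (S ξ))⟫ := by
        have h5 := star_apply_eq' π (star c) (π b (S η)) (Δ (π a (S ξ)))
        rw [star_star] at h5
        exact h5
      have h6 : π (star c) (π b (S η)) = π (star c * b) (S η) := by rw [map_mul]; rfl
      rw [h4, h6, hgen a (star c * b) ξ η, star_mul, star_star, mul_assoc]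
    rw [e1, e2, sub_self]
  have himg : (fun a : A => (adjoint S).comp (Δ.comp ((π a).comp S))) = ψ := by
    funext a
    refine ContinuousLinearMap.ext fun ξ => ?_
    refine ext_inner_left ℂ fun η => ?_
    have h6 : ⟪η, ((adjoint S).comp (Δ.comp ((π a).comp S))) ξ⟫
        = ⟪S η, Δ (π a (S ξ))⟫ := by
      rw [ContinuousLinearMap.comp_apply, ContinuousLinearMap.comp_apply,
        ContinuousLinearMap.comp_apply, adjoint_inner_right]
    rw [h6]
    have h7 : S η = π 1 (S η) := by rw [map_one]; rfl
    rw [h7, hgen a 1 ξ η, star_one, one_mul]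
  exact ⟨Δ, hpos, hpos1, hcomm, himg⟩

end Main

end RNAux

/-- The map `Δ ↦ φ_Δ` with `φ_Δ(a) = S* Δ π(a) S` is an order-preserving bijection from
`{Δ ∈ π(A)' : 0 ≤ Δ ≤ I}` onto the set of completely positive maps `ψ` with `ψ ≤ φ`. -/
theorem stmt13 {A H H₁ : Type*}
    [NormedRing A] [StarRing A] [CStarRing A] [NormedAlgebra ℂ A] [StarModule ℂ A]
    [CompleteSpace A]
    [NormedAddCommGroup H] [InnerProductSpace ℂ H] [CompleteSpace H]
    [NormedAddCommGroup H₁] [InnerProductSpace ℂ H₁] [CompleteSpace H₁]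
    (φ : A →ₗ[ℂ] (H →L[ℂ] H)) (hφ : IsCPFun fun a => φ a)
    (π : A →⋆ₐ[ℂ] (H₁ →L[ℂ] H₁)) (S : H →L[ℂ] H₁)
    (hdil : ∀ a : A, φ a = (adjoint S).comp ((π a).comp S))
    (hmin : (Submodule.span ℂ
      {v : H₁ | ∃ (a : A) (ξ : H), v = π a (S ξ)}).topologicalClosure = ⊤) :
    Set.BijOn
      (fun Δ : H₁ →L[ℂ] H₁ => fun a : A => (adjoint S).comp (Δ.comp ((π a).comp S)))
      {Δ : H₁ →L[ℂ] H₁ |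
        Δ.IsPositive ∧ (1 - Δ).IsPositive ∧ ∀ a : A, Δ.comp (π a) = (π a).comp Δ}
      {ψ : A → (H →L[ℂ] H) |
        (∀ a b : A, ψ (a + b) = ψ a + ψ b) ∧ (∀ (c : ℂ) (a : A), ψ (c • a) = c • ψ a) ∧
        IsCPFun ψ ∧ IsCPFun fun a => φ a - ψ a} ∧
    ∀ Δ₁ ∈ {Δ : H₁ →L[ℂ] H₁ |
        Δ.IsPositive ∧ (1 - Δ).IsPositive ∧ ∀ a : A, Δ.comp (π a) = (π a).comp Δ},
      ∀ Δ₂ ∈ {Δ : H₁ →L[ℂ] H₁ |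
        Δ.IsPositive ∧ (1 - Δ).IsPositive ∧ ∀ a : A, Δ.comp (π a) = (π a).comp Δ},
      ((Δ₂ - Δ₁).IsPositive ↔
        IsCPFun fun a : A =>
          (adjoint S).comp (Δ₂.comp ((π a).comp S)) -
            (adjoint S).comp (Δ₁.comp ((π a).comp S))) := by
  have hfun : ∀ Δ₁ Δ₂ : H₁ →L[ℂ] H₁,
      (fun a : A => (adjoint S).comp (Δ₂.comp ((π a).comp S)) -
        (adjoint S).comp (Δ₁.comp ((π a).comp S)))
      = fun a : A => (adjoint S).comp ((Δ₂ - Δ₁).comp ((π a).comp S)) := by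
    intro Δ₁ Δ₂
    funext a
    ext x
    simp [ContinuousLinearMap.sub_apply, map_sub]
  constructor
  · refine ⟨?_, ?_, ?_⟩
    · -- MapsTo
      rintro Δ ⟨hp, hp1, hc⟩
      have hcpt : ∀ (a : A) (x : H₁), Δ (π a x) = π a (Δ x) := fun a x =>
        ContinuousLinearMap.ext_iff.mp (hc a) x
      refine ⟨?_, ?_, ?_, ?_⟩
      · intro a b
        ext x
        simp [map_add]
      · intro c a
        ext x
        simp [map_smul]
      · exact RNAux.cp_aux π S Δ hp hc
      · have hc1 : ∀ a : A, (1 - Δ).comp (π a) = (π a).comp (1 - Δ) := by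
          intro a
          ext x
          simp [ContinuousLinearMap.sub_apply, hcpt]
        have heqf : (fun a : A => φ a - (adjoint S).comp (Δ.comp ((π a).comp S)))
            = fun a : A => (adjoint S).comp ((1 - Δ).comp ((π a).comp S)) := by
          funext a
          rw [hdil a]
          ext x
          simp [ContinuousLinearMap.sub_apply, map_sub]
        rw [heqf]
        exact RNAux.cp_aux π S (1 - Δ) hp1 hc1
    · -- InjOn
      rintro Δ₁ ⟨_, _, hc1⟩ Δ₂ ⟨_, _, hc2⟩ heq
      have h0 : Δ₁ - Δ₂ = 0 := by
        apply RNAux.ext_dense π S hmin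
        intro a b ξ η
        rw [ContinuousLinearMap.sub_apply, inner_sub_right,
          ← RNAux.gen_inner' π S Δ₁ hc1 a b ξ η, ← RNAux.gen_inner' π S Δ₂ hc2 a b ξ η]
        have happ := ContinuousLinearMap.ext_iff.mp (congrFun heq (star b * a)) ξ
        simp only [ContinuousLinearMap.comp_apply] at happ
        rw [happ, sub_self]
      exact sub_eq_zero.1 h0
    · -- SurjOn
      rintro ψ ⟨hadd, hsmul, hcp, hcpd⟩
      have hcpd' : IsCPFun fun a : A => (adjoint S).comp ((π a).comp S) - ψ a := by
        have heqf : (fun a : A => φ a - ψ a)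
            = fun a : A => (adjoint S).comp ((π a).comp S) - ψ a := by
          funext a
          rw [hdil a]
        rwa [heqf] at hcpd
      obtain ⟨Δ, hp, hp1, hcm, himg⟩ := RNAux.surj_aux π S ψ hmin hcp hcpd'
      exact ⟨Δ, ⟨hp, hp1, hcm⟩, himg⟩
  · -- order preservation
    rintro Δ₁ ⟨_, _, hc1⟩ Δ₂ ⟨_, _, hc2⟩
    have hcomm : ∀ a : A, (Δ₂ - Δ₁).comp (π a) = (π a).comp (Δ₂ - Δ₁) := by
      intro a
      ext x
      have e1 : Δ₁ (π a x) = π a (Δ₁ x) := ContinuousLinearMap.ext_iff.mp (hc1 a) x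
      have e2 : Δ₂ (π a x) = π a (Δ₂ x) := ContinuousLinearMap.ext_iff.mp (hc2 a) x
      simp [ContinuousLinearMap.sub_apply, e1, e2]
    constructor
    · intro hD
      rw [hfun Δ₁ Δ₂]
      exact RNAux.cp_aux π S (Δ₂ - Δ₁) hD hcomm
    · intro hcpD
      rw [hfun Δ₁ Δ₂] at hcpD
      exact RNAux.pos_of_cp π S hmin (Δ₂ - Δ₁) hcomm hcpD
end
end
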